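/- Let G be a nice finite simple graph that is 2-degenerate, i.e., every non-empty subgraph of G has a vertex of degree at most 2, and let m := |E(G)|. Then for every set W of m + 4 distinct strictly positive integers, there exists an edge-injective neighbour-sum-distinguishing edge-weighting of G with all weights taken from W (i.e., an injective map from E(G) into W that is neighbour-sum-distinguishing). In particular, χ^{e,1}_Σ(G) ≤ |E(G)| + 4. -/

import Mathlib

open scoped Classical
open Finset

/-- The degree of a vertex `v` in a finite simple graph `G`. -/
noncomputable def degG {V : Type*} [Fintype V] (G : SimpleGraph V) (v : V) : ℕ :=
  (Finset.univ.filter (fun x => G.Adj v x)).card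

/-- The sum `σ_w(v)` of the weights of the edges of `G` incident to `v`. -/
noncomputable def vSum {V : Type*} [Fintype V] (G : SimpleGraph V) (w : Sym2 V → ℕ) (v : V) : ℕ :=
  ∑ x ∈ Finset.univ.filter (fun x => G.Adj v x), w s(v, x)

/-- An edge-weighting is edge-injective if distinct edges receive distinct weights. -/
def EdgeInjective {V : Type*} (G : SimpleGraph V) (w : Sym2 V → ℕ) : Prop :=
  ∀ e ∈ G.edgeSet, ∀ f ∈ G.edgeSet, w e = w f → e = f

/-- An edge-weighting is neighbour-sum-distinguishing if `σ_w(u) ≠ σ_w(v)` for every edge `uv`. -/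
def NSD {V : Type*} [Fintype V] (G : SimpleGraph V) (w : Sym2 V → ℕ) : Prop :=
  ∀ u v, G.Adj u v → vSum G w u ≠ vSum G w v

/-- A graph is nice if no edge has both of its endpoints of degree 1
(equivalently, no connected component is isomorphic to `K₂`). -/
def Nice {V : Type*} [Fintype V] (G : SimpleGraph V) : Prop :=
  ∀ u v, G.Adj u v → ¬ (degG G u = 1 ∧ degG G v = 1)

/-- `χ^{e,1}_Σ(G)`: the smallest `k` such that `G` admits an edge-injective
neighbour-sum-distinguishing edge-weighting with weights from `{1, ..., k}`. -/
noncomputable def chiE1 {V : Type*} [Fintype V] (G : SimpleGraph V) : ℕ :=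
  sInf {k | ∃ w : Sym2 V → ℕ, (∀ e ∈ G.edgeSet, w e ∈ Finset.Icc 1 k) ∧
    EdgeInjective G w ∧ NSD G w}

section Auxiliary

set_option linter.unusedSectionVars false

variable {V : Type*} [Fintype V]



/-- From 2-degeneracy, extract a rank function with at most 2 higher-ranked neighbours. -/
lemma exists_rank (G : SimpleGraph V)
    (hdegen : ∀ H : G.Subgraph, H.verts.Nonempty → ∃ v ∈ H.verts, (H.neighborSet v).ncard ≤ 2) :
    ∃ rank : V → ℕ, Function.Injective rank ∧
      ∀ x, ((univ.filter (fun y => G.Adj x y ∧ rank x < rank y)).card ≤ 2) := by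
  classical
  have key : ∀ S : Finset V, ∃ rank : V → ℕ, Set.InjOn rank ↑S ∧
      (∀ x ∈ S, ((S.filter (fun y => G.Adj x y ∧ rank x < rank y)).card ≤ 2)) := by
    intro S
    induction S using Finset.strongInductionOn with
    | _ S ih =>
      rcases S.eq_empty_or_nonempty with rfl | hS
      · exact ⟨fun _ => 0, by simp, by simp⟩
      · -- the induced subgraph on S
        set H : G.Subgraph :=
          { verts := ↑S
            Adj := fun a b => G.Adj a b ∧ a ∈ S ∧ b ∈ S
            adj_sub := fun h => h.1
            edge_vert := fun h => h.2.1
            symm := ⟨fun a b h => ⟨h.1.symm, h.2.2, h.2.1⟩⟩ } with hH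
        obtain ⟨v, hvS, hv2⟩ := hdegen H (by simpa [hH] using hS)
        have hvS' : v ∈ S := by simpa [hH] using hvS
        have hnb : (H.neighborSet v) = ↑(S.filter (fun y => G.Adj v y)) := by
          ext y
          simp [hH, SimpleGraph.Subgraph.neighborSet, hvS', and_comm]
        have hcard : (S.filter (fun y => G.Adj v y)).card ≤ 2 := by
          have := hv2
          rw [hnb, Set.ncard_coe_finset] at this
          exact this
        obtain ⟨r, hrinj, hr2⟩ := ih (S.erase v) (Finset.erase_ssubset hvS')
        refine ⟨fun x => if x = v then 0 else r x + 1, ?_, ?_⟩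
        · intro a ha b hb hab
          by_cases hav : a = v
          · by_cases hbv : b = v
            · rw [hav, hbv]
            · simp [hav, hbv] at hab
          · by_cases hbv : b = v
            · simp [hav, hbv] at hab
            · simp only [if_neg hav, if_neg hbv, Nat.add_right_cancel_iff] at hab
              exact hrinj (by simp [Finset.mem_erase, hav]; exact ha)
                (by simp [Finset.mem_erase, hbv]; exact hb) hab
        · intro x hx
          by_cases hxv : x = v
          · subst hxv
            refine le_trans (Finset.card_le_card ?_) hcard
            intro y hy
            simp only [Finset.mem_filter] at hy ⊢
            exact ⟨hy.1, hy.2.1⟩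
          · have hx' : x ∈ S.erase v := Finset.mem_erase.mpr ⟨hxv, hx⟩
            refine le_trans (Finset.card_le_card ?_) (hr2 x hx')
            intro y hy
            simp only [Finset.mem_filter] at hy
            have hyv : y ≠ v := by
              rintro rfl
              simp [hxv] at hy
            simp only [Finset.mem_filter, Finset.mem_erase]
            refine ⟨⟨hyv, hy.1⟩, hy.2.1, ?_⟩
            have := hy.2.2
            simp [hxv, hyv] at this
            omega
  obtain ⟨r, hrinj, hr2⟩ := key Finset.univ
  refine ⟨r, fun a b hab => hrinj (by simp) (by simp) hab, fun x => ?_⟩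
  simpa using hr2 x (Finset.mem_univ x)



/-- Neighbours of `x` as a finset. -/
noncomputable def nbr (G : SimpleGraph V) (x : V) : Finset V :=
  Finset.univ.filter (fun y => G.Adj x y)

/-- The sum of the weights of the *assigned* edges at `x` (those not inside `S`). -/
noncomputable def sig (G : SimpleGraph V) (S : Finset V) (w : Sym2 V → ℕ) (x : V) : ℕ :=
  ∑ y ∈ (nbr G x).filter (fun y => ¬(x ∈ S ∧ y ∈ S)), w s(x, y)

/-- The number of unassigned edges (both endpoints in `S`). -/
noncomputable def mS (G : SimpleGraph V) (S : Finset V) : ℕ :=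
  (G.edgeFinset.filter (fun e => ∀ v ∈ e, v ∈ S)).card

lemma allin_pair (S : Finset V) (a b : V) :
    (∀ v ∈ (s(a,b) : Sym2 V), v ∈ S) ↔ a ∈ S ∧ b ∈ S := by
  constructor
  · intro h
    exact ⟨h a (Sym2.mem_mk_left a b), h b (Sym2.mem_mk_right a b)⟩
  · rintro ⟨ha, hb⟩ v hv
    rcases Sym2.mem_iff.mp hv with rfl | rfl
    · exact ha
    · exact hb

lemma mem_nbr (G : SimpleGraph V) (x y : V) : y ∈ nbr G x ↔ G.Adj x y := by
  simp [nbr]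

lemma sig_empty (G : SimpleGraph V) (w : Sym2 V → ℕ) (x : V) :
    sig G (∅ : Finset V) w x = ∑ y ∈ nbr G x, w s(x, y) := by
  unfold sig
  congr 1
  apply Finset.filter_true_of_mem
  intro y _
  simp

noncomputable def vSum' {V : Type*} [Fintype V] (G : SimpleGraph V) (w : Sym2 V → ℕ) (v : V) : ℕ :=
  ∑ x ∈ Finset.univ.filter (fun x => G.Adj v x), w s(v, x)

section ArithPart
omit [Fintype V]
variable [DecidableEq V]

/-- Greedy choice of distinct values for non-leaf indices, avoiding one forbidden
value each and pairwise (matching) sum-inequalities. -/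
lemma phaseA (M : Finset (V × V)) (g : V → ℕ)
    (hMne : ∀ m ∈ M, m.1 ≠ m.2)
    (hMdisj : ∀ m ∈ M, ∀ m' ∈ M, m ≠ m' →
      m.1 ≠ m'.1 ∧ m.1 ≠ m'.2 ∧ m.2 ≠ m'.1 ∧ m.2 ≠ m'.2)
    (bad : V → Finset ℕ) :
    ∀ (A : Finset V) (P : Finset ℕ), A.card + 2 ≤ P.card →
    (∀ x ∈ A, (bad x).card ≤ 1) →
    ∃ β : V → ℕ, Set.InjOn β ↑A ∧ (∀ x ∈ A, β x ∈ P ∧ β x ∉ bad x) ∧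
      (∀ m ∈ M, m.1 ∈ A → m.2 ∈ A → g m.1 + β m.1 ≠ g m.2 + β m.2) := by
  intro A
  induction A using Finset.strongInductionOn with
  | _ A ih =>
    intro P hcard hbad
    rcases A.eq_empty_or_nonempty with rfl | ⟨x, hxA⟩
    · exact ⟨fun _ => 0, by simp, by simp, fun m _ h => by simp at h⟩
    · obtain ⟨β₀, hinj, hmem, hpair⟩ := ih (A.erase x) (Finset.erase_ssubset hxA) P
        (by have := Finset.card_erase_of_mem hxA; omega)
        (fun y hy => hbad y (Finset.mem_of_mem_erase hy))
      -- forbidden values for x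
      set MF : Finset (V × V) := M.filter
        (fun m => (m.1 = x ∧ m.2 ∈ A.erase x) ∨ (m.2 = x ∧ m.1 ∈ A.erase x)) with hMF
      have hMFcard : MF.card ≤ 1 := by
        rw [Finset.card_le_one]
        intro a ha b hb
        simp only [hMF, Finset.mem_filter] at ha hb
        by_contra hne
        obtain ⟨h1, h2, h3, h4⟩ := hMdisj a ha.1 b hb.1 hne
        rcases ha.2 with ⟨hax, _⟩ | ⟨hax, _⟩ <;> rcases hb.2 with ⟨hbx, _⟩ | ⟨hbx, _⟩
        · exact h1 (hax.trans hbx.symm)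
        · exact h2 (hax.trans hbx.symm)
        · exact h3 (hax.trans hbx.symm)
        · exact h4 (hax.trans hbx.symm)
      set pairF : Finset ℕ := MF.image
        (fun m => (g (if m.1 = x then m.2 else m.1) + β₀ (if m.1 = x then m.2 else m.1)) - g x)
        with hpairF
      set forb : Finset ℕ := (A.erase x).image β₀ ∪ bad x ∪ pairF with hforb
      have hforbcard : forb.card < P.card := by
        have h1 : ((A.erase x).image β₀).card ≤ A.card - 1 := by
          refine le_trans (Finset.card_image_le) ?_
          rw [Finset.card_erase_of_mem hxA]
        have h2 : pairF.card ≤ 1 := le_trans Finset.card_image_le hMFcard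
        have h3 : forb.card ≤ ((A.erase x).image β₀).card + (bad x).card + pairF.card := by
          refine le_trans (Finset.card_union_le _ _) ?_
          have := Finset.card_union_le ((A.erase x).image β₀) (bad x)
          omega
        have h4 := hbad x hxA
        have h5 : 1 ≤ A.card := Finset.card_pos.mpr ⟨x, hxA⟩
        omega
      obtain ⟨b, hbP, hbforb⟩ : ∃ b ∈ P, b ∉ forb := by
        have : (P \ forb).Nonempty := by
          rw [← Finset.card_pos]
          have := Finset.card_le_card_sdiff_add_card (s := P) (t := forb)
          have h2 : P.card - forb.card ≤ (P \ forb).card := by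
            omega
          omega
        obtain ⟨b, hb⟩ := this
        exact ⟨b, (Finset.mem_sdiff.mp hb).1, (Finset.mem_sdiff.mp hb).2⟩
      refine ⟨fun y => if y = x then b else β₀ y, ?_, ?_, ?_⟩
      · intro a ha b' hb' hab
        by_cases hax : a = x
        · by_cases hbx : b' = x
          · rw [hax, hbx]
          · exfalso
            simp only [if_pos hax, if_neg hbx] at hab
            apply hbforb
            refine Finset.mem_union_left _ (Finset.mem_union_left _ ?_)
            exact Finset.mem_image.mpr ⟨b', Finset.mem_erase.mpr ⟨hbx, hb'⟩, hab.symm⟩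
        · by_cases hbx : b' = x
          · exfalso
            simp only [if_neg hax, if_pos hbx] at hab
            apply hbforb
            refine Finset.mem_union_left _ (Finset.mem_union_left _ ?_)
            exact Finset.mem_image.mpr ⟨a, Finset.mem_erase.mpr ⟨hax, ha⟩, hab⟩
          · simp only [if_neg hax, if_neg hbx] at hab
            exact hinj (Finset.mem_coe.mpr (Finset.mem_erase.mpr ⟨hax, ha⟩))
              (Finset.mem_coe.mpr (Finset.mem_erase.mpr ⟨hbx, hb'⟩)) hab
      · intro y hy
        by_cases hyx : y = x
        · subst hyx
          simp only [if_pos rfl]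
          refine ⟨hbP, fun hc => hbforb ?_⟩
          exact Finset.mem_union_left _ (Finset.mem_union_right _ hc)
        · simp only [if_neg hyx]
          exact hmem y (Finset.mem_erase.mpr ⟨hyx, hy⟩)
      · intro m hm hm1 hm2
        have hne := hMne m hm
        by_cases h1 : m.1 = x
        · have h2 : m.2 ≠ x := fun hc => hne (h1.trans hc.symm)
          simp only [if_pos h1, if_neg h2]
          have hmMF : m ∈ MF := Finset.mem_filter.mpr ⟨hm, Or.inl ⟨h1, Finset.mem_erase.mpr ⟨h2, hm2⟩⟩⟩
          intro hc
          apply hbforb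
          refine Finset.mem_union_right _ ?_
          refine Finset.mem_image.mpr ⟨m, hmMF, ?_⟩
          simp only [if_pos h1]
          rw [h1] at hc
          omega
        · by_cases h2 : m.2 = x
          · simp only [if_neg h1, if_pos h2]
            have hmMF : m ∈ MF := Finset.mem_filter.mpr ⟨hm, Or.inr ⟨h2, Finset.mem_erase.mpr ⟨h1, hm1⟩⟩⟩
            intro hc
            apply hbforb
            refine Finset.mem_union_right _ ?_
            refine Finset.mem_image.mpr ⟨m, hmMF, ?_⟩
            have h1x : ¬ (m.1 = x) := h1
            simp only [if_neg h1x]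
            rw [h2] at hc
            omega
          · simp only [if_neg h1, if_neg h2]
            exact hpair m hm (Finset.mem_erase.mpr ⟨h1, hm1⟩) (Finset.mem_erase.mpr ⟨h2, hm2⟩)

/-- Assignment of values to "leaves": distinct values from `Q`, avoiding one bad value
each, total sum avoiding `D`, and the coupling constraints `c t + β t ≠ S₀ + Σβ`. -/
lemma subLemma (T : Finset V) (hl : 2 ≤ T.card)
    (Q : Finset ℕ) (hQpos : ∀ n ∈ Q, 0 < n) (hQcard : T.card + 4 ≤ Q.card)
    (S₀ : ℕ) (D : Finset ℕ) (hD : D.card ≤ 2)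
    (c : V → ℕ)
    (hcinj : ∀ t₁ ∈ T, ∀ t₂ ∈ T, c t₁ = c t₂ → c t₁ ≠ 0 → t₁ = t₂)
    (bad : V → Finset ℕ) (hbad : ∀ t ∈ T, (bad t).card ≤ 1) :
    ∃ β : V → ℕ, Set.InjOn β ↑T ∧ (∀ t ∈ T, β t ∈ Q ∧ β t ∉ bad t) ∧
      (S₀ + ∑ t ∈ T, β t ∉ D) ∧
      (∀ t ∈ T, c t + β t ≠ S₀ + ∑ t ∈ T, β t) := by
  classical
  set l := T.card with hldef
  set small : Prop := T.card ≤ 3 with hsmalldef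
  set X : Finset ℕ := if T.card ≤ 3 then T.biUnion bad
    else Q.filter (fun v => T.card - 1 ≤ (T.filter (fun t => v ∈ bad t)).card) with hXdef
  have hXcard : X.card ≤ 3 := by
    rw [hXdef]
    split_ifs with hsm
    · refine le_trans (Finset.card_biUnion_le) (le_trans ?_ hsm)
      calc ∑ t ∈ T, (bad t).card ≤ ∑ t ∈ T, 1 := Finset.sum_le_sum (fun t ht => hbad t ht)
        _ = T.card := by simp
    · have : (Q.filter (fun v => T.card - 1 ≤ (T.filter (fun t => v ∈ bad t)).card)).card ≤ 1 := by
        rw [Finset.card_le_one]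
        intro v hv w hw
        by_contra hvw
        simp only [Finset.mem_filter] at hv hw
        have hdisj : Disjoint (T.filter (fun t => v ∈ bad t)) (T.filter (fun t => w ∈ bad t)) := by
          rw [Finset.disjoint_left]
          intro t ht ht'
          simp only [Finset.mem_filter] at ht ht'
          have h2 : ({v, w} : Finset ℕ) ⊆ bad t := by
            intro z hz
            rcases Finset.mem_insert.mp hz with rfl | hz
            · exact ht.2
            · rw [Finset.mem_singleton.mp hz]; exact ht'.2
          have := Finset.card_le_card h2
          rw [Finset.card_insert_of_notMem (by simpa using hvw), Finset.card_singleton] at this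
          have := hbad t ht.1
          omega
        have hunion := Finset.card_le_card (Finset.union_subset
          (Finset.filter_subset (fun t => v ∈ bad t) T)
          (Finset.filter_subset (fun t => w ∈ bad t) T))
        rw [Finset.card_union_of_disjoint hdisj] at hunion
        omega
      omega
  -- choose R of size l+1 inside Q \ X
  have hQ'card : l + 1 ≤ (Q \ X).card := by
    have := Finset.le_card_sdiff X Q
    have h2 : Q.card - X.card ≤ (Q \ X).card := by
      have := Finset.card_le_card_sdiff_add_card (s := Q) (t := X)
      omega
    omega
  obtain ⟨R, hRQ', hRcard⟩ := Finset.exists_subset_card_eq hQ'card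
  -- choose q ∈ R such that the sum avoids D
  have hRpos : ∀ v ∈ R, 0 < v := fun v hv => hQpos v (Finset.mem_sdiff.mp (hRQ' hv)).1
  have hqex : ∃ q ∈ R, S₀ + ((∑ x ∈ R, x) - q) ∉ D := by
    by_contra hcon
    push_neg at hcon
    have hinj : Set.InjOn (fun q => S₀ + ((∑ x ∈ R, x) - q)) ↑R := by
      intro a ha b hb hab
      have ha' : a ≤ ∑ x ∈ R, x := Finset.single_le_sum (fun i _ => Nat.zero_le i) ha
      have hb' : b ≤ ∑ x ∈ R, x := Finset.single_le_sum (fun i _ => Nat.zero_le i) hb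
      simp only at hab
      omega
    have himg : R.image (fun q => S₀ + ((∑ x ∈ R, x) - q)) ⊆ D := by
      intro z hz
      obtain ⟨q, hq, rfl⟩ := Finset.mem_image.mp hz
      exact hcon q hq
    have := Finset.card_le_card himg
    rw [Finset.card_image_of_injOn hinj, hRcard] at this
    omega
  obtain ⟨q, hqR, hqD⟩ := hqex
  set B : Finset ℕ := R.erase q with hBdef
  have hBcard : B.card = l := by rw [hBdef, Finset.card_erase_of_mem hqR, hRcard]; omega
  have hBsum : q + ∑ x ∈ B, x = ∑ x ∈ R, x := by
    rw [hBdef]; exact Finset.add_sum_erase R id hqR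
  set Z : ℕ := ∑ x ∈ B, x with hZdef
  set S : ℕ := S₀ + Z with hSdef
  have hSD : S ∉ D := by
    have hq' : q ≤ ∑ x ∈ R, x := Finset.single_le_sum (fun i _ => Nat.zero_le i) hqR
    have : (∑ x ∈ R, x) - q = Z := by omega
    rw [hSdef]
    rw [← this]
    exact hqD
  have hBQ : B ⊆ Q := fun v hv => (Finset.mem_sdiff.mp (hRQ' (Finset.mem_of_mem_erase hv))).1
  have hBX : ∀ v ∈ B, v ∉ X := fun v hv => (Finset.mem_sdiff.mp (hRQ' (Finset.mem_of_mem_erase hv))).2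
  have hBpos : ∀ v ∈ B, 0 < v := fun v hv => hQpos v (hBQ hv)
  -- forbidden sets
  set gset : V → Finset ℕ := fun t => if c t = 0 then ∅ else {S - c t} with hgdef
  set F : V → Finset ℕ := fun t => bad t ∪ gset t with hFdef
  have hgcount : ∀ v, 0 < v → ∀ t₁ ∈ T, ∀ t₂ ∈ T, v ∈ gset t₁ → v ∈ gset t₂ → t₁ = t₂ := by
    intro v hv t₁ ht₁ t₂ ht₂ h₁ h₂
    rw [hgdef] at h₁ h₂
    simp only at h₁ h₂
    by_cases hc₁ : c t₁ = 0
    · rw [if_pos hc₁] at h₁; exact absurd h₁ (Finset.notMem_empty v)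
    · by_cases hc₂ : c t₂ = 0
      · rw [if_pos hc₂] at h₂; exact absurd h₂ (Finset.notMem_empty v)
      · rw [if_neg hc₁, Finset.mem_singleton] at h₁
        rw [if_neg hc₂, Finset.mem_singleton] at h₂
        exact hcinj t₁ ht₁ t₂ ht₂ (by omega) hc₁
  have hFcard : ∀ t ∈ T, (F t).card ≤ 2 := by
    intro t ht
    rw [hFdef]
    refine le_trans (Finset.card_union_le _ _) ?_
    have h1 := hbad t ht
    have h2 : (gset t).card ≤ 1 := by
      rw [hgdef]
      simp only
      split_ifs <;> simp
    omega
  -- the smallness dichotomy for bad values in B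
  have hbadB : ∀ v ∈ B, (T.card ≤ 3 → ∀ t ∈ T, v ∉ bad t) ∧
      (¬ T.card ≤ 3 → ¬ (T.card - 1 ≤ (T.filter (fun t => v ∈ bad t)).card)) := by
    intro v hv
    constructor
    · intro hsm t ht hvb
      apply hBX v hv
      rw [hXdef, if_pos hsm]
      exact Finset.mem_biUnion.mpr ⟨t, ht, hvb⟩
    · intro hsm hcnt
      apply hBX v hv
      rw [hXdef, if_neg hsm]
      exact Finset.mem_filter.mpr ⟨hBQ hv, hcnt⟩
  -- Hall's condition
  have hall : ∀ s : Finset {t // t ∈ T},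
      s.card ≤ (s.biUnion (fun t => B \ F t.val)).card := by
    intro s
    rcases s.eq_empty_or_nonempty with rfl | ⟨t₀, ht₀⟩
    · simp
    · set I : Finset ℕ := B.filter (fun v => ∀ t ∈ s, v ∈ F t.val) with hIdef
      have hsub : B \ I ⊆ s.biUnion (fun t => B \ F t.val) := by
        intro v hv
        rw [Finset.mem_sdiff] at hv
        have : ¬ (∀ t ∈ s, v ∈ F t.val) := by
          intro h
          exact hv.2 (Finset.mem_filter.mpr ⟨hv.1, h⟩)
        push_neg at this
        obtain ⟨t, hts, htv⟩ := this
        exact Finset.mem_biUnion.mpr ⟨t, hts, Finset.mem_sdiff.mpr ⟨hv.1, htv⟩⟩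
      have hIB : I ⊆ B := Finset.filter_subset _ _
      have hcard1 : B.card - I.card ≤ (s.biUnion (fun t => B \ F t.val)).card := by
        have := Finset.card_le_card hsub
        rw [Finset.card_sdiff_of_subset hIB] at this
        exact this
      have hsT : s.card ≤ T.card := by
        have := Finset.card_le_univ s
        simpa [Fintype.card_coe] using this
      -- key: s.card + I.card ≤ l
      have hkey : s.card + I.card ≤ l := by
        by_cases hI0 : I.card = 0
        · omega
        · -- there is v ∈ I
          have hIpos : 0 < I.card := by omega
          obtain ⟨v, hvI⟩ := Finset.card_pos.mp hIpos
          have hvB : v ∈ B := hIB hvI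
          have hvF : ∀ t ∈ s, v ∈ F t.val := (Finset.mem_filter.mp hvI).2
          have hvpos : 0 < v := hBpos v hvB
          -- count of t ∈ s with v ∈ gset t is ≤ 1
          have hsg : ∀ (u : ℕ), 0 < u → (s.filter (fun t => u ∈ gset t.val)).card ≤ 1 := by
            intro u hu
            rw [Finset.card_le_one]
            intro a ha b hb
            simp only [Finset.mem_filter] at ha hb
            have := hgcount u hu a.val a.prop b.val b.prop ha.2 hb.2
            exact Subtype.ext this
          by_cases hI1 : I.card = 1
          · -- need s.card ≤ l - 1
            by_contra hcon
            have hsl : s.card = l := by omega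
            have hsuniv : ∀ t : {t // t ∈ T}, t ∈ s := by
              intro t
              by_contra htns
              have : s ⊆ Finset.univ.erase t := by
                intro a ha
                exact Finset.mem_erase.mpr ⟨fun hc => htns (hc ▸ ha), Finset.mem_univ a⟩
              have := Finset.card_le_card this
              rw [Finset.card_erase_of_mem (Finset.mem_univ t)] at this
              have huniv : (Finset.univ : Finset {t // t ∈ T}).card = T.card := Fintype.card_coe T
              omega
            -- v belongs to F t for ALL t in T
            have hvall : ∀ t ∈ T, v ∈ F t := by
              intro t ht
              exact hvF ⟨t, ht⟩ (hsuniv ⟨t, ht⟩)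
            have hsplit : ∀ t ∈ T, v ∈ bad t ∨ v ∈ gset t := by
              intro t ht
              have := hvall t ht
              rw [hFdef] at this
              exact Finset.mem_union.mp this
            have hgT : (T.filter (fun t => v ∈ gset t)).card ≤ 1 := by
              rw [Finset.card_le_one]
              intro a ha b hb
              simp only [Finset.mem_filter] at ha hb
              exact hgcount v hvpos a ha.1 b hb.1 ha.2 hb.2
            have hcover : T ⊆ (T.filter (fun t => v ∈ bad t)) ∪ (T.filter (fun t => v ∈ gset t)) := by
              intro t ht
              rcases hsplit t ht with h | h
              · exact Finset.mem_union_left _ (Finset.mem_filter.mpr ⟨ht, h⟩)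
              · exact Finset.mem_union_right _ (Finset.mem_filter.mpr ⟨ht, h⟩)
            have hcc := Finset.card_le_card hcover
            have hcc2 := Finset.card_union_le (T.filter (fun t => v ∈ bad t))
              (T.filter (fun t => v ∈ gset t))
            by_cases hsm : T.card ≤ 3
            · have h0 : (T.filter (fun t => v ∈ bad t)).card = 0 := by
                rw [Finset.card_eq_zero, Finset.filter_eq_empty_iff]
                intro t ht
                exact (hbadB v hvB).1 hsm t ht
              omega
            · have := (hbadB v hvB).2 hsm
              omega
          · -- I.card ≥ 2
            have hI2 : 2 ≤ I.card := by omega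
            obtain ⟨v₁, hv₁, v₂, hv₂, hv12⟩ := Finset.one_lt_card.mp hI2
            have hv₁B := hIB hv₁; have hv₂B := hIB hv₂
            have hv₁pos := hBpos v₁ hv₁B; have hv₂pos := hBpos v₂ hv₂B
            have hv₁F := (Finset.mem_filter.mp hv₁).2
            have hv₂F := (Finset.mem_filter.mp hv₂).2
            -- for each t ∈ s, at least one of v₁, v₂ in gset t
            have hone : ∀ t ∈ s, v₁ ∈ gset t.val ∨ v₂ ∈ gset t.val := by
              intro t ht
              have h1 := hv₁F t ht
              have h2 := hv₂F t ht
              rw [hFdef] at h1 h2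
              rcases Finset.mem_union.mp h1 with hb1 | hg1
              · rcases Finset.mem_union.mp h2 with hb2 | hg2
                · exfalso
                  have hsub2 : ({v₁, v₂} : Finset ℕ) ⊆ bad t.val := by
                    intro z hz
                    rcases Finset.mem_insert.mp hz with rfl | hz
                    · exact hb1
                    · rw [Finset.mem_singleton.mp hz]; exact hb2
                  have := Finset.card_le_card hsub2
                  rw [Finset.card_insert_of_notMem (by simpa using hv12),
                    Finset.card_singleton] at this
                  have := hbad t.val t.prop
                  omega
                · exact Or.inr hg2
              · exact Or.inl hg1
            have hcover : s ⊆ (s.filter (fun t => v₁ ∈ gset t.val)) ∪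
                (s.filter (fun t => v₂ ∈ gset t.val)) := by
              intro t ht
              rcases hone t ht with h | h
              · exact Finset.mem_union_left _ (Finset.mem_filter.mpr ⟨ht, h⟩)
              · exact Finset.mem_union_right _ (Finset.mem_filter.mpr ⟨ht, h⟩)
            have hs2 : s.card ≤ 2 := by
              have h1 := Finset.card_le_card hcover
              have h2 := Finset.card_union_le (s.filter (fun t => v₁ ∈ gset t.val))
                (s.filter (fun t => v₂ ∈ gset t.val))
              have h3 := hsg v₁ hv₁pos
              have h4 := hsg v₂ hv₂pos
              omega
            -- also I.card ≤ 2 since I ⊆ F t₀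
            have hIF : I.card ≤ 2 := by
              have : I ⊆ (F t₀.val) := by
                intro z hz
                exact (Finset.mem_filter.mp hz).2 t₀ ht₀
              exact le_trans (Finset.card_le_card this) (hFcard t₀.val t₀.prop)
            -- in the small case, this is impossible
            by_cases hsm : T.card ≤ 3
            · exfalso
              -- v₁ not in any bad, so v₁ ∈ gset t for all t ∈ s; same for v₂
              have hg1 : ∀ t ∈ s, v₁ ∈ gset t.val := by
                intro t ht
                have h1 := hv₁F t ht
                rw [hFdef] at h1
                rcases Finset.mem_union.mp h1 with hb | hg
                · exact absurd hb ((hbadB v₁ hv₁B).1 hsm t.val t.prop)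
                · exact hg
              have hg2 : ∀ t ∈ s, v₂ ∈ gset t.val := by
                intro t ht
                have h2 := hv₂F t ht
                rw [hFdef] at h2
                rcases Finset.mem_union.mp h2 with hb | hg
                · exact absurd hb ((hbadB v₂ hv₂B).1 hsm t.val t.prop)
                · exact hg
              -- then v₁ = v₂ via gset t₀ being a (sub)singleton
              have h1 := hg1 t₀ ht₀
              have h2 := hg2 t₀ ht₀
              rw [hgdef] at h1 h2
              simp only at h1 h2
              by_cases hc : c t₀.val = 0
              · rw [if_pos hc] at h1; exact absurd h1 (Finset.notMem_empty v₁)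
              · rw [if_neg hc, Finset.mem_singleton] at h1
                rw [if_neg hc, Finset.mem_singleton] at h2
                exact hv12 (h1.trans h2.symm)
            · -- big case: l ≥ 4, s.card ≤ 2 ≤ l - 2
              omega
      have hIcard : I.card ≤ B.card := Finset.card_le_card hIB
      have hBl : B.card = l := hBcard
      have hkey' : s.card + I.card ≤ B.card := by rw [hBl]; exact hkey
      exact le_trans (Nat.le_sub_of_add_le hkey') hcard1
  obtain ⟨f, hfinj, hf⟩ := (Finset.all_card_le_biUnion_card_iff_exists_injective
    (fun t : {t // t ∈ T} => B \ F t.val)).mp hall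
  set β : V → ℕ := fun x => if h : x ∈ T then f ⟨x, h⟩ else 0 with hβdef
  have hβval : ∀ t (ht : t ∈ T), β t = f ⟨t, ht⟩ := by
    intro t ht
    rw [hβdef]
    simp [ht]
  have hβB : ∀ t ∈ T, β t ∈ B ∧ β t ∉ F t := by
    intro t ht
    rw [hβval t ht]
    have := hf ⟨t, ht⟩
    exact ⟨(Finset.mem_sdiff.mp this).1, (Finset.mem_sdiff.mp this).2⟩
  have hβinj : Set.InjOn β ↑T := by
    intro a ha b hb hab
    rw [Finset.mem_coe] at ha hb
    rw [hβval a ha, hβval b hb] at hab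
    have h2 := hfinj hab
    exact congrArg Subtype.val h2
  have himg : T.image β = B := by
    apply Finset.eq_of_subset_of_card_le
    · intro z hz
      obtain ⟨t, ht, rfl⟩ := Finset.mem_image.mp hz
      exact (hβB t ht).1
    · rw [Finset.card_image_of_injOn hβinj, hBcard]
  have hsumβ : ∑ t ∈ T, β t = Z := by
    have h : ∑ x ∈ T.image β, (fun x => x) x = ∑ x ∈ T, (fun x => x) (β x) :=
      Finset.sum_image (fun a ha b hb hh => hβinj ha hb hh)
    simp only at h
    rw [hZdef, ← himg]
    exact h.symm
  refine ⟨β, hβinj, ?_, ?_, ?_⟩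
  · intro t ht
    refine ⟨hBQ (hβB t ht).1, fun hc => (hβB t ht).2 ?_⟩
    rw [hFdef]
    exact Finset.mem_union_left _ hc
  · rw [hsumβ]
    exact hSD
  · intro t ht hc
    rw [hsumβ] at hc
    by_cases hct : c t = 0
    · -- β t < Z since B has ≥ 2 positive elements
      have hβt : β t ∈ B := (hβB t ht).1
      obtain ⟨u, hu, hune⟩ : ∃ u ∈ B, u ≠ β t := by
        have h2 : 2 ≤ B.card := by omega
        obtain ⟨a, ha, b, hb, hab⟩ := Finset.one_lt_card.mp h2
        by_cases haβ : a = β t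
        · exact ⟨b, hb, fun hc' => hab (haβ.trans hc'.symm)⟩
        · exact ⟨a, ha, haβ⟩
      have hlt : β t < Z := by
        rw [hZdef]
        have := Finset.add_sum_erase B id hβt
        have hu' : u ∈ B.erase (β t) := Finset.mem_erase.mpr ⟨hune, hu⟩
        have : u ≤ ∑ x ∈ B.erase (β t), x :=
          Finset.single_le_sum (fun i _ => Nat.zero_le i) hu'
        have hupos := hBpos u hu
        have hsum' : β t + ∑ x ∈ B.erase (β t), x = ∑ x ∈ B, x :=
          Finset.add_sum_erase B id hβt
        omega
      rw [hct] at hc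
      omega
    · -- β t = S - c t contradicts β t ∉ gset t
      apply (hβB t ht).2
      rw [hFdef]
      refine Finset.mem_union_right _ ?_
      rw [hgdef]
      simp only [if_neg hct]
      rw [Finset.mem_singleton]
      rw [hSdef]
      omega

set_option maxHeartbeats 800000 in
/-- The master choice lemma: distinct values for the `N`-indexed edges. -/
lemma arithChoice (N : Finset V) (hN : N.Nonempty)
    (P : Finset ℕ) (hpos : ∀ n ∈ P, 0 < n) (hcard : N.card + 4 ≤ P.card)
    (p0 : ℕ) (D : Finset ℕ) (hD : D.card ≤ 2)
    (T : Finset V) (hTN : T ⊆ N)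
    (c : V → ℕ)
    (hcinj : ∀ t₁ ∈ T, ∀ t₂ ∈ T, c t₁ = c t₂ → c t₁ ≠ 0 → t₁ = t₂)
    (hk1 : N.card = 1 → ∀ t ∈ T, c t ≠ p0)
    (bad : V → Finset ℕ) (hbad : ∀ x ∈ N, (bad x).card ≤ 1)
    (M : Finset (V × V)) (g : V → ℕ)
    (hMne : ∀ m ∈ M, m.1 ≠ m.2)
    (hMdisj : ∀ m ∈ M, ∀ m' ∈ M, m ≠ m' →
      m.1 ≠ m'.1 ∧ m.1 ≠ m'.2 ∧ m.2 ≠ m'.1 ∧ m.2 ≠ m'.2)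
    (hMN : ∀ m ∈ M, m.1 ∈ N ∧ m.2 ∈ N ∧ m.1 ∉ T ∧ m.2 ∉ T) :
    ∃ β : V → ℕ, Set.InjOn β ↑N ∧ (∀ x ∈ N, β x ∈ P ∧ β x ∉ bad x) ∧
      (p0 + ∑ x ∈ N, β x ∉ D) ∧
      (∀ t ∈ T, c t + β t ≠ p0 + ∑ x ∈ N, β x) ∧
      (∀ m ∈ M, g m.1 + β m.1 ≠ g m.2 + β m.2) := by
  classical
  have hsdiffcard : (N \ T).card = N.card - T.card := Finset.card_sdiff_of_subset hTN
  have hTcard : T.card ≤ N.card := Finset.card_le_card hTN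
  by_cases hl : 2 ≤ T.card
  · -- big leaf case
    obtain ⟨β₀, hinj₀, hmem₀, hpair₀⟩ := phaseA M g hMne hMdisj bad (N \ T) P
      (by omega) (fun x hx => hbad x (Finset.mem_sdiff.mp hx).1)
    set used : Finset ℕ := (N \ T).image β₀ with husedDef
    set Q : Finset ℕ := P \ used with hQdef
    have husedsub : used ⊆ P := by
      intro z hz
      obtain ⟨x, hx, rfl⟩ := Finset.mem_image.mp hz
      exact (hmem₀ x hx).1
    have hQcard : T.card + 4 ≤ Q.card := by
      rw [hQdef, Finset.card_sdiff_of_subset husedsub]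
      have h1 : used.card ≤ (N \ T).card := Finset.card_image_le
      omega
    set S₀ : ℕ := p0 + ∑ x ∈ N \ T, β₀ x with hS₀def
    obtain ⟨β₁, hinj₁, hmem₁, hsum₁, hcpl₁⟩ := subLemma T hl Q
      (fun n hn => hpos n (Finset.mem_sdiff.mp hn).1) hQcard S₀ D hD c hcinj bad
      (fun t ht => hbad t (hTN ht))
    set β : V → ℕ := fun x => if x ∈ T then β₁ x else β₀ x with hβdef
    have hβT : ∀ t ∈ T, β t = β₁ t := fun t ht => by rw [hβdef]; simp [ht]
    have hβA : ∀ x ∈ N \ T, β x = β₀ x := fun x hx => by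
      rw [hβdef]; simp [(Finset.mem_sdiff.mp hx).2]
    have hsplit : ∑ x ∈ N, β x = (∑ x ∈ N \ T, β₀ x) + ∑ t ∈ T, β₁ t := by
      have hU : (N \ T) ∪ T = N := Finset.sdiff_union_of_subset hTN
      calc ∑ x ∈ N, β x = ∑ x ∈ (N \ T) ∪ T, β x := by rw [hU]
        _ = (∑ x ∈ N \ T, β x) + ∑ x ∈ T, β x := Finset.sum_union Finset.sdiff_disjoint
        _ = (∑ x ∈ N \ T, β₀ x) + ∑ t ∈ T, β₁ t := by
            rw [Finset.sum_congr rfl hβA, Finset.sum_congr rfl hβT]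
    have htot : p0 + ∑ x ∈ N, β x = S₀ + ∑ t ∈ T, β₁ t := by
      rw [hsplit, hS₀def]; omega
    refine ⟨β, ?_, ?_, ?_, ?_, ?_⟩
    · -- injectivity
      intro a ha b hb hab
      rw [Finset.mem_coe] at ha hb
      by_cases haT : a ∈ T
      · by_cases hbT : b ∈ T
        · exact hinj₁ (Finset.mem_coe.mpr haT) (Finset.mem_coe.mpr hbT)
            (by rwa [hβT a haT, hβT b hbT] at hab)
        · exfalso
          have hbA : b ∈ N \ T := Finset.mem_sdiff.mpr ⟨hb, hbT⟩
          rw [hβT a haT, hβA b hbA] at hab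
          have h1 : β₁ a ∈ Q := (hmem₁ a haT).1
          rw [hQdef] at h1
          exact (Finset.mem_sdiff.mp h1).2 (by
            rw [husedDef]
            exact Finset.mem_image.mpr ⟨b, hbA, hab.symm⟩)
      · by_cases hbT : b ∈ T
        · exfalso
          have haA : a ∈ N \ T := Finset.mem_sdiff.mpr ⟨ha, haT⟩
          rw [hβA a haA, hβT b hbT] at hab
          have h1 : β₁ b ∈ Q := (hmem₁ b hbT).1
          rw [hQdef] at h1
          exact (Finset.mem_sdiff.mp h1).2 (by
            rw [husedDef]
            exact Finset.mem_image.mpr ⟨a, haA, hab⟩)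
        · exact hinj₀ (Finset.mem_coe.mpr (Finset.mem_sdiff.mpr ⟨ha, haT⟩))
            (Finset.mem_coe.mpr (Finset.mem_sdiff.mpr ⟨hb, hbT⟩))
            (by rwa [hβA a (Finset.mem_sdiff.mpr ⟨ha, haT⟩),
                hβA b (Finset.mem_sdiff.mpr ⟨hb, hbT⟩)] at hab)
    · intro x hx
      by_cases hxT : x ∈ T
      · rw [hβT x hxT]
        have h1 := (hmem₁ x hxT).1
        rw [hQdef] at h1
        exact ⟨(Finset.mem_sdiff.mp h1).1, (hmem₁ x hxT).2⟩
      · rw [hβA x (Finset.mem_sdiff.mpr ⟨hx, hxT⟩)]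
        exact hmem₀ x (Finset.mem_sdiff.mpr ⟨hx, hxT⟩)
    · rw [htot]; exact hsum₁
    · intro t ht
      rw [htot, hβT t ht]
      exact hcpl₁ t ht
    · intro m hm
      obtain ⟨h1, h2, h3, h4⟩ := hMN m hm
      rw [hβA m.1 (Finset.mem_sdiff.mpr ⟨h1, h3⟩), hβA m.2 (Finset.mem_sdiff.mpr ⟨h2, h4⟩)]
      exact hpair₀ m hm (Finset.mem_sdiff.mpr ⟨h1, h3⟩) (Finset.mem_sdiff.mpr ⟨h2, h4⟩)
  · -- T.card ≤ 1
    push_neg at hl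
    by_cases hk : N.card = 1
    · -- single element
      obtain ⟨x₀, hx₀⟩ := Finset.card_eq_one.mp hk
      have hx₀N : x₀ ∈ N := by rw [hx₀]; exact Finset.mem_singleton_self x₀
      set forb : Finset ℕ := bad x₀ ∪ D.image (fun d => d - p0) with hforbdef
      have hforbcard : forb.card < P.card := by
        have h1 : forb.card ≤ (bad x₀).card + (D.image (fun d => d - p0)).card :=
          Finset.card_union_le _ _
        have h2 : (D.image (fun d => d - p0)).card ≤ D.card := Finset.card_image_le
        have h3 := hbad x₀ hx₀N
        omega
      obtain ⟨b, hbP, hbforb⟩ : ∃ b ∈ P, b ∉ forb := by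
        have h2 : 0 < (P \ forb).card := by
          have := Finset.card_le_card_sdiff_add_card (s := P) (t := forb)
          omega
        obtain ⟨b, hb⟩ := Finset.card_pos.mp h2
        exact ⟨b, (Finset.mem_sdiff.mp hb).1, (Finset.mem_sdiff.mp hb).2⟩
      refine ⟨fun _ => b, ?_, ?_, ?_, ?_, ?_⟩
      · intro a ha b' hb' _
        rw [hx₀] at *
        rw [Finset.mem_coe, Finset.mem_singleton] at ha hb'
        rw [ha, hb']
      · intro x hx
        rw [hx₀, Finset.mem_singleton] at hx
        subst hx
        exact ⟨hbP, fun hc => hbforb (Finset.mem_union_left _ hc)⟩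
      · rw [hx₀, Finset.sum_singleton]
        show p0 + b ∉ D
        intro hc
        apply hbforb
        refine Finset.mem_union_right _ (Finset.mem_image.mpr ⟨p0 + b, hc, by omega⟩)
      · intro t ht
        have hct := hk1 hk t ht
        rw [hx₀, Finset.sum_singleton]
        have htx : t = x₀ := by
          have := hTN ht; rw [hx₀, Finset.mem_singleton] at this; exact this
        rw [htx] at hct ⊢
        show c x₀ + b ≠ p0 + b
        omega
      · intro m hm
        exfalso
        obtain ⟨h1, h2, _, _⟩ := hMN m hm
        rw [hx₀, Finset.mem_singleton] at h1 h2
        exact hMne m hm (h1.trans h2.symm)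
    · -- N.card ≥ 2, T.card ≤ 1
      have hk2 : 2 ≤ N.card := by
        have := Finset.card_pos.mpr hN
        omega
      have hNTne : (N \ T).Nonempty := by
        rw [← Finset.card_pos]
        omega
      obtain ⟨xs, hxs⟩ := hNTne
      have hxsN : xs ∈ N := (Finset.mem_sdiff.mp hxs).1
      have hxsT : xs ∉ T := (Finset.mem_sdiff.mp hxs).2
      set A : Finset V := (N \ T).erase xs with hAdef
      have hAcard : A.card = N.card - T.card - 1 := by
        rw [hAdef, Finset.card_erase_of_mem hxs, hsdiffcard]
      obtain ⟨β₀, hinj₀, hmem₀, hpair₀⟩ := phaseA M g hMne hMdisj bad A P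
        (by omega) (fun x hx => hbad x (Finset.mem_sdiff.mp (Finset.mem_of_mem_erase hx)).1)
      set used : Finset ℕ := A.image β₀ with husedDef
      have husedsub : used ⊆ P := by
        intro z hz
        obtain ⟨x, hx, rfl⟩ := Finset.mem_image.mp hz
        exact (hmem₀ x hx).1
      have husedcard : used.card ≤ A.card := Finset.card_image_le
      -- the pair constraint possibly involving xs
      set MF : Finset (V × V) := M.filter
        (fun m => (m.1 = xs ∧ m.2 ∈ A) ∨ (m.2 = xs ∧ m.1 ∈ A)) with hMFdef
      have hMFcard : MF.card ≤ 1 := by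
        rw [Finset.card_le_one]
        intro a ha b hb
        simp only [hMFdef, Finset.mem_filter] at ha hb
        by_contra hne
        obtain ⟨h1, h2, h3, h4⟩ := hMdisj a ha.1 b hb.1 hne
        rcases ha.2 with ⟨hax, _⟩ | ⟨hax, _⟩ <;> rcases hb.2 with ⟨hbx, _⟩ | ⟨hbx, _⟩
        · exact h1 (hax.trans hbx.symm)
        · exact h2 (hax.trans hbx.symm)
        · exact h3 (hax.trans hbx.symm)
        · exact h4 (hax.trans hbx.symm)
      set pairF : Finset ℕ := MF.image
        (fun m => (g (if m.1 = xs then m.2 else m.1) + β₀ (if m.1 = xs then m.2 else m.1)) - g xs)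
        with hpairFdef
      have hpairFcard : pairF.card ≤ 1 := le_trans Finset.card_image_le hMFcard
      set SA : ℕ := p0 + ∑ x ∈ A, β₀ x with hSAdef
      -- extra forbidden values for xs
      set extra : Finset ℕ := if T.card = 1 then T.image (fun t => c t - SA)
        else D.image (fun d => d - SA) with hextradef
      have hextracard : extra.card ≤ 2 := by
        rw [hextradef]
        split_ifs with h1
        · refine le_trans Finset.card_image_le ?_
          omega
        · exact le_trans Finset.card_image_le hD
      set forbs : Finset ℕ := used ∪ bad xs ∪ pairF ∪ extra with hforbsdef
      have hforbscard : forbs.card < P.card := by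
        have h1 : forbs.card ≤ used.card + (bad xs).card + pairF.card + extra.card := by
          refine le_trans (Finset.card_union_le _ _) ?_
          have h2 := Finset.card_union_le (used ∪ bad xs) pairF
          have h3 := Finset.card_union_le used (bad xs)
          omega
        have h4 := hbad xs hxsN
        omega
      obtain ⟨bs, hbsP, hbsforb⟩ : ∃ b ∈ P, b ∉ forbs := by
        have h2 : 0 < (P \ forbs).card := by
          have := Finset.card_le_card_sdiff_add_card (s := P) (t := forbs)
          omega
        obtain ⟨b, hb⟩ := Finset.card_pos.mp h2
        exact ⟨b, (Finset.mem_sdiff.mp hb).1, (Finset.mem_sdiff.mp hb).2⟩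
      -- now the leaf value (if T.card = 1)
      set usedA : Finset ℕ := used ∪ {bs} with husedAdef
      set Dtrans : Finset ℕ := D.image (fun d => d - (SA + bs)) with hDtransdef
      have hex2 : ∀ t₀ ∈ T, ∃ bt ∈ P, bt ∉ usedA ∪ bad t₀ ∪ Dtrans := by
        intro t₀ ht₀
        have h1 : (usedA ∪ bad t₀ ∪ Dtrans).card <  P.card := by
          have h2 : (usedA ∪ bad t₀ ∪ Dtrans).card ≤ usedA.card + (bad t₀).card + Dtrans.card := by
            refine le_trans (Finset.card_union_le _ _) ?_
            have := Finset.card_union_le usedA (bad t₀)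
            omega
          have h3 : usedA.card ≤ used.card + 1 := by
            rw [husedAdef]
            refine le_trans (Finset.card_union_le _ _) ?_
            simp
          have h4 := hbad t₀ (hTN ht₀)
          have h5 : Dtrans.card ≤ D.card := Finset.card_image_le
          have h6 : T.card = 1 := by
            have : 0 < T.card := Finset.card_pos.mpr ⟨t₀, ht₀⟩
            omega
          omega
        have h2 : 0 < (P \ (usedA ∪ bad t₀ ∪ Dtrans)).card := by
          have := Finset.card_le_card_sdiff_add_card (s := P) (t := (usedA ∪ bad t₀ ∪ Dtrans))
          omega
        obtain ⟨b, hb⟩ := Finset.card_pos.mp h2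
        exact ⟨b, (Finset.mem_sdiff.mp hb).1, (Finset.mem_sdiff.mp hb).2⟩
      -- define bt via choice over T (T has at most one element)
      have hchoice : ∃ bt : V → ℕ, ∀ t₀ ∈ T, bt t₀ ∈ P ∧ bt t₀ ∉ usedA ∪ bad t₀ ∪ Dtrans := by
        choose f hf1 hf2 using hex2
        exact ⟨fun t => if h : t ∈ T then f t h else 0,
          fun t ht => by simp only [dif_pos ht]; exact ⟨hf1 t ht, hf2 t ht⟩⟩
      obtain ⟨bt, hbt⟩ := hchoice
      set β : V → ℕ := fun x => if x ∈ T then bt x else if x = xs then bs else β₀ x with hβdef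
      have hβT : ∀ t ∈ T, β t = bt t := fun t ht => by rw [hβdef]; simp [ht]
      have hβxs : β xs = bs := by rw [hβdef]; simp [hxsT]
      have hβA : ∀ x ∈ A, β x = β₀ x := by
        intro x hx
        rw [hAdef] at hx
        have h1 : x ≠ xs := (Finset.mem_erase.mp hx).1
        have h2 : x ∉ T := (Finset.mem_sdiff.mp (Finset.mem_of_mem_erase hx)).2
        rw [hβdef]; simp [h1, h2]
      have hNsplit : ∑ x ∈ N, β x = (∑ x ∈ A, β₀ x) + bs + ∑ t ∈ T, bt t := by
        have hU : (N \ T) ∪ T = N := Finset.sdiff_union_of_subset hTN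
        rw [← hU, Finset.sum_union Finset.sdiff_disjoint]
        have h1 : ∑ x ∈ N \ T, β x = (∑ x ∈ A, β₀ x) + bs := by
          rw [hAdef]
          rw [← Finset.add_sum_erase (N \ T) β hxs, hβxs]
          have : ∑ x ∈ (N \ T).erase xs, β x = ∑ x ∈ (N \ T).erase xs, β₀ x :=
            Finset.sum_congr rfl (fun x hx => hβA x (by rwa [hAdef]))
          omega
        have h2 : ∑ t ∈ T, β t = ∑ t ∈ T, bt t := Finset.sum_congr rfl hβT
        omega
      -- facts about membership of values
      have hbtP : ∀ t ∈ T, bt t ∈ P := fun t ht => (hbt t ht).1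
      have hbtnot : ∀ t ∈ T, bt t ∉ usedA ∪ bad t ∪ Dtrans := fun t ht => (hbt t ht).2
      refine ⟨β, ?_, ?_, ?_, ?_, ?_⟩
      · -- injectivity on N
        intro a ha b hb hab
        rw [Finset.mem_coe] at ha hb
        by_cases haT : a ∈ T
        · by_cases hbT : b ∈ T
          · -- both in T, T.card ≤ 1
            have h1 : T.card = 1 := by
              have : 0 < T.card := Finset.card_pos.mpr ⟨a, haT⟩
              omega
            obtain ⟨t₀, ht₀⟩ := Finset.card_eq_one.mp h1
            rw [ht₀, Finset.mem_singleton] at haT hbT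
            rw [haT, hbT]
          · exfalso
            rw [hβT a haT] at hab
            have hmem := hbtnot a haT
            by_cases hbxs : b = xs
            · rw [hbxs, hβxs] at hab
              apply hmem
              refine Finset.mem_union_left _ (Finset.mem_union_left _ ?_)
              rw [husedAdef]
              exact Finset.mem_union_right _ (by rw [hab]; exact Finset.mem_singleton_self bs)
            · have hbA : b ∈ A := by
                rw [hAdef]
                exact Finset.mem_erase.mpr ⟨hbxs, Finset.mem_sdiff.mpr ⟨hb, hbT⟩⟩
              rw [hβdef] at hab
              simp only [if_neg hbT, if_neg hbxs] at hab
              apply hmem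
              refine Finset.mem_union_left _ (Finset.mem_union_left _ ?_)
              rw [husedAdef]
              refine Finset.mem_union_left _ ?_
              rw [husedDef]
              exact Finset.mem_image.mpr ⟨b, hbA, hab.symm⟩
        · by_cases hbT : b ∈ T
          · exfalso
            rw [hβT b hbT] at hab
            have hmem := hbtnot b hbT
            by_cases haxs : a = xs
            · rw [haxs, hβxs] at hab
              apply hmem
              refine Finset.mem_union_left _ (Finset.mem_union_left _ ?_)
              rw [husedAdef]
              exact Finset.mem_union_right _ (by rw [← hab]; exact Finset.mem_singleton_self bs)
            · have haA : a ∈ A := by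
                rw [hAdef]
                exact Finset.mem_erase.mpr ⟨haxs, Finset.mem_sdiff.mpr ⟨ha, haT⟩⟩
              rw [hβdef] at hab
              simp only [if_neg haT, if_neg haxs] at hab
              apply hmem
              refine Finset.mem_union_left _ (Finset.mem_union_left _ ?_)
              rw [husedAdef]
              refine Finset.mem_union_left _ ?_
              rw [husedDef]
              exact Finset.mem_image.mpr ⟨a, haA, hab⟩
          · by_cases haxs : a = xs
            · by_cases hbxs : b = xs
              · rw [haxs, hbxs]
              · exfalso
                have hbA : b ∈ A := by
                  rw [hAdef]
                  exact Finset.mem_erase.mpr ⟨hbxs, Finset.mem_sdiff.mpr ⟨hb, hbT⟩⟩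
                rw [haxs, hβxs] at hab
                rw [hβdef] at hab
                simp only [if_neg hbT, if_neg hbxs] at hab
                apply hbsforb
                refine Finset.mem_union_left _ (Finset.mem_union_left _ (Finset.mem_union_left _ ?_))
                rw [husedDef]
                exact Finset.mem_image.mpr ⟨b, hbA, hab.symm⟩
            · by_cases hbxs : b = xs
              · exfalso
                have haA : a ∈ A := by
                  rw [hAdef]
                  exact Finset.mem_erase.mpr ⟨haxs, Finset.mem_sdiff.mpr ⟨ha, haT⟩⟩
                rw [hbxs, hβxs] at hab
                rw [hβdef] at hab
                simp only [if_neg haT, if_neg haxs] at hab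
                apply hbsforb
                refine Finset.mem_union_left _ (Finset.mem_union_left _ (Finset.mem_union_left _ ?_))
                rw [husedDef]
                exact Finset.mem_image.mpr ⟨a, haA, hab⟩
              · have haA : a ∈ A := by
                  rw [hAdef]
                  exact Finset.mem_erase.mpr ⟨haxs, Finset.mem_sdiff.mpr ⟨ha, haT⟩⟩
                have hbA : b ∈ A := by
                  rw [hAdef]
                  exact Finset.mem_erase.mpr ⟨hbxs, Finset.mem_sdiff.mpr ⟨hb, hbT⟩⟩
                rw [hβA a haA, hβA b hbA] at hab
                exact hinj₀ (Finset.mem_coe.mpr haA) (Finset.mem_coe.mpr hbA) hab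
      · -- membership and bad avoidance
        intro x hx
        by_cases hxT : x ∈ T
        · rw [hβT x hxT]
          refine ⟨hbtP x hxT, fun hc => hbtnot x hxT ?_⟩
          exact Finset.mem_union_left _ (Finset.mem_union_right _ hc)
        · by_cases hxxs : x = xs
          · subst hxxs
            rw [hβxs]
            refine ⟨hbsP, fun hc => hbsforb ?_⟩
            exact Finset.mem_union_left _
              (Finset.mem_union_left _ (Finset.mem_union_right _ hc))
          · have hxA : x ∈ A := by
              rw [hAdef]
              exact Finset.mem_erase.mpr ⟨hxxs, Finset.mem_sdiff.mpr ⟨hx, hxT⟩⟩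
            rw [hβA x hxA]
            exact hmem₀ x hxA
      · -- total sum avoids D
        rw [hNsplit]
        intro hc
        by_cases hT1 : T.card = 1
        · obtain ⟨t₀, ht₀⟩ := Finset.card_eq_one.mp hT1
          have ht₀T : t₀ ∈ T := by rw [ht₀]; exact Finset.mem_singleton_self t₀
          rw [ht₀, Finset.sum_singleton] at hc
          apply hbtnot t₀ ht₀T
          refine Finset.mem_union_right _ ?_
          rw [hDtransdef]
          refine Finset.mem_image.mpr ⟨p0 + ((∑ x ∈ A, β₀ x) + bs + bt t₀), hc, ?_⟩
          rw [hSAdef]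
          omega
        · have hT0 : T = ∅ := by
            rw [← Finset.card_eq_zero]
            omega
          rw [hT0, Finset.sum_empty] at hc
          apply hbsforb
          refine Finset.mem_union_right _ ?_
          rw [hextradef, if_neg (by rw [hT0]; simp : ¬ T.card = 1)]
          refine Finset.mem_image.mpr ⟨p0 + ((∑ x ∈ A, β₀ x) + bs + 0), by simpa using hc, ?_⟩
          rw [hSAdef]
          omega
      · -- coupling
        intro t ht
        have hT1 : T.card = 1 := by
          have : 0 < T.card := Finset.card_pos.mpr ⟨t, ht⟩
          omega
        obtain ⟨t₀, ht₀⟩ := Finset.card_eq_one.mp hT1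
        have htt₀ : t = t₀ := by rw [ht₀, Finset.mem_singleton] at ht; exact ht
        subst htt₀
        rw [hNsplit, hβT t (by rw [ht₀]; exact Finset.mem_singleton_self t), ht₀,
          Finset.sum_singleton]
        intro hc
        -- c t + bt t = p0 + ΣA + bs + bt t, so c t = SA + bs
        have hceq : c t = SA + bs := by
          rw [hSAdef]
          omega
        apply hbsforb
        refine Finset.mem_union_right _ ?_
        rw [hextradef, if_pos hT1]
        refine Finset.mem_image.mpr ⟨t, by rw [ht₀]; exact Finset.mem_singleton_self t, ?_⟩
        omega
      · -- pairs
        intro m hm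
        obtain ⟨h1N, h2N, h1T, h2T⟩ := hMN m hm
        by_cases h1xs : m.1 = xs
        · have h2xs : m.2 ≠ xs := fun hc => hMne m hm (h1xs.trans hc.symm)
          have h2A : m.2 ∈ A := by
            rw [hAdef]
            exact Finset.mem_erase.mpr ⟨h2xs, Finset.mem_sdiff.mpr ⟨h2N, h2T⟩⟩
          rw [h1xs, hβxs, hβA m.2 h2A]
          intro hc
          apply hbsforb
          refine Finset.mem_union_left _ (Finset.mem_union_right _ ?_)
          rw [hpairFdef]
          refine Finset.mem_image.mpr ⟨m, ?_, ?_⟩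
          · rw [hMFdef]
            exact Finset.mem_filter.mpr ⟨hm, Or.inl ⟨h1xs, h2A⟩⟩
          · simp only [if_pos h1xs]
            omega
        · by_cases h2xs : m.2 = xs
          · have h1A : m.1 ∈ A := by
              rw [hAdef]
              exact Finset.mem_erase.mpr ⟨h1xs, Finset.mem_sdiff.mpr ⟨h1N, h1T⟩⟩
            rw [h2xs, hβxs, hβA m.1 h1A]
            intro hc
            apply hbsforb
            refine Finset.mem_union_left _ (Finset.mem_union_right _ ?_)
            rw [hpairFdef]
            refine Finset.mem_image.mpr ⟨m, ?_, ?_⟩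
            · rw [hMFdef]
              exact Finset.mem_filter.mpr ⟨hm, Or.inr ⟨h2xs, h1A⟩⟩
            · simp only [if_neg h1xs]
              omega
          · have h1A : m.1 ∈ A := by
              rw [hAdef]
              exact Finset.mem_erase.mpr ⟨h1xs, Finset.mem_sdiff.mpr ⟨h1N, h1T⟩⟩
            have h2A : m.2 ∈ A := by
              rw [hAdef]
              exact Finset.mem_erase.mpr ⟨h2xs, Finset.mem_sdiff.mpr ⟨h2N, h2T⟩⟩
            rw [hβA m.1 h1A, hβA m.2 h2A]
            exact hpair₀ m hm h1A h2A

end ArithPart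

section MainInduction

variable (G : SimpleGraph V)

set_option maxHeartbeats 1600000 in
lemma mainLemma (W : Finset ℕ) (hWpos : ∀ x ∈ W, 0 < x)
    (rank : V → ℕ) (hrinj : Function.Injective rank)
    (hfwd : ∀ x, ((nbr G x).filter (fun y => rank x < rank y)).card ≤ 2) :
    ∀ S : Finset V, (∀ x ∈ S, ∀ y, rank y < rank x → y ∈ S) →
    ∀ (w0 : Sym2 V → ℕ) (P : Finset ℕ), P ⊆ W →
    P.card = mS G S + 4 →
    (∀ u v, G.Adj u v → ¬(u ∈ S ∧ v ∈ S) → w0 s(u,v) ∈ W ∧ w0 s(u,v) ∉ P) →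
    (∀ u v u' v', G.Adj u v → G.Adj u' v' → ¬(u ∈ S ∧ v ∈ S) → ¬(u' ∈ S ∧ v' ∈ S) →
      w0 s(u,v) = w0 s(u',v') → (s(u,v) : Sym2 V) = s(u',v')) →
    (∀ u v, G.Adj u v → (u ∉ S ∨ (nbr G u).filter (· ∈ S) = ∅) →
      (v ∉ S ∨ (nbr G v).filter (· ∈ S) = ∅) → sig G S w0 u ≠ sig G S w0 v) →
    (∀ u v, G.Adj u v → u ∈ S → v ∈ S → (nbr G u).filter (· ∈ S) = {v} →
      (nbr G v).filter (· ∈ S) = {u} → sig G S w0 u ≠ sig G S w0 v) →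
    ∃ w : Sym2 V → ℕ,
      Set.InjOn w G.edgeSet ∧ (∀ e ∈ G.edgeSet, w e ∈ W) ∧
      (∀ u v, G.Adj u v → vSum' G w u ≠ vSum' G w v) := by
  intro S
  induction S using Finset.strongInductionOn with
  | _ S ih =>
    intro hdown w0 P hPW hPcard hassigned hinj0 h3 h4
    rcases S.eq_empty_or_nonempty with rfl | hSne
    · -- base case
      refine ⟨w0, ?_, ?_, ?_⟩
      · intro e he f hf hef
        induction e using Sym2.inductionOn with | _ u v =>
        induction f using Sym2.inductionOn with | _ u' v' =>
        exact hinj0 u v u' v' he hf (by simp) (by simp) hef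
      · intro e he
        induction e using Sym2.inductionOn with | _ u v =>
        exact (hassigned u v he (by simp)).1
      · intro u v hadj
        have hu : vSum' G w0 u = sig G (∅ : Finset V) w0 u := by
          rw [sig_empty]; rfl
        have hv : vSum' G w0 v = sig G (∅ : Finset V) w0 v := by
          rw [sig_empty]; rfl
        rw [hu, hv]
        exact h3 u v hadj (Or.inl (by simp)) (Or.inl (by simp))
    · -- inductive step
      obtain ⟨v₀, hv₀S, hmax⟩ := Finset.exists_max_image S rank hSne
      set S' : Finset V := S.erase v₀ with hS'def
      have hS'sub : S' ⊂ S := Finset.erase_ssubset hv₀S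
      have hS'S : S' ⊆ S := Finset.erase_subset _ _
      have hv₀S' : v₀ ∉ S' := Finset.notMem_erase _ _
      have hrankS' : ∀ x ∈ S', rank x < rank v₀ := by
        intro x hx
        have h1 := hmax x (hS'S hx)
        have h2 : x ≠ v₀ := Finset.ne_of_mem_erase hx
        have h3' : rank x ≠ rank v₀ := fun hc => h2 (hrinj hc)
        omega
      have hdown' : ∀ x ∈ S', ∀ y, rank y < rank x → y ∈ S' := by
        intro x hx y hy
        have hyS : y ∈ S := hdown x (hS'S hx) y hy
        refine Finset.mem_erase.mpr ⟨?_, hyS⟩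
        intro hc
        subst hc
        have := hrankS' x hx
        omega
      have houtrank : ∀ x y, x ∈ S → G.Adj x y → y ∉ S → rank x < rank y := by
        intro x y hxS hadj hyS
        have hne : x ≠ y := G.ne_of_adj hadj
        have h1 : rank x ≠ rank y := fun hc => hne (hrinj hc)
        by_contra hcon
        push_neg at hcon
        have : rank y < rank x := by omega
        exact hyS (hdown x hxS y this)
      set N : Finset V := (nbr G v₀).filter (· ∈ S) with hNdef
      have hNS' : ∀ x ∈ N, x ∈ S' := by
        intro x hx
        rw [hNdef, Finset.mem_filter, mem_nbr] at hx
        exact Finset.mem_erase.mpr ⟨fun hc => G.ne_of_adj hx.1 hc.symm, hx.2⟩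
      have hNadj : ∀ x ∈ N, G.Adj v₀ x := by
        intro x hx
        rw [hNdef, Finset.mem_filter, mem_nbr] at hx
        exact hx.1
      -- transport of neighbourhood filters for vertices not adjacent to v₀ inside S
      have htransfilter : ∀ x, x ∈ S' → x ∉ N →
          (nbr G x).filter (· ∈ S) = (nbr G x).filter (· ∈ S') := by
        intro x hxS' hxN
        apply Finset.filter_congr
        intro y hy
        rw [mem_nbr] at hy
        constructor
        · intro hyS
          refine Finset.mem_erase.mpr ⟨?_, hyS⟩
          intro hc
          subst hc
          exact hxN (by rw [hNdef, Finset.mem_filter, mem_nbr]; exact ⟨hy.symm, hS'S hxS'⟩)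
        · intro hyS'
          exact hS'S hyS'
      by_cases hk0 : N = ∅
      · -- no unassigned edges at v₀: just recurse
        have hcond : ∀ u v, G.Adj u v → (¬(u ∈ S ∧ v ∈ S) ↔ ¬(u ∈ S' ∧ v ∈ S')) := by
          intro u v hadj
          constructor
          · intro h hc
            exact h ⟨hS'S hc.1, hS'S hc.2⟩
          · intro h hc
            apply h
            constructor
            · refine Finset.mem_erase.mpr ⟨?_, hc.1⟩
              intro hcu
              subst hcu
              have : v ∈ N := by
                rw [hNdef, Finset.mem_filter, mem_nbr]; exact ⟨hadj, hc.2⟩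
              rw [hk0] at this
              exact absurd this (Finset.notMem_empty v)
            · refine Finset.mem_erase.mpr ⟨?_, hc.2⟩
              intro hcv
              subst hcv
              have : u ∈ N := by
                rw [hNdef, Finset.mem_filter, mem_nbr]; exact ⟨hadj.symm, hc.1⟩
              rw [hk0] at this
              exact absurd this (Finset.notMem_empty u)
        have hmSeq : mS G S' = mS G S := by
          unfold mS
          congr 1
          apply Finset.filter_congr
          intro e he
          rw [SimpleGraph.mem_edgeFinset] at he
          induction e using Sym2.inductionOn with | _ a b =>
          rw [allin_pair, allin_pair]
          have hadj : G.Adj a b := he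
          constructor
          · intro hab
            exact ⟨hS'S hab.1, hS'S hab.2⟩
          · intro hab
            by_contra hc
            exact ((hcond a b hadj).mpr hc) hab
        have hsigeq : ∀ x, sig G S' w0 x = sig G S w0 x := by
          intro x
          unfold sig
          refine Finset.sum_congr ?_ (fun _ _ => rfl)
          apply Finset.filter_congr
          intro y hy
          rw [mem_nbr] at hy
          exact ⟨fun h => (hcond x y hy).mpr h, fun h => (hcond x y hy).mp h⟩
        have hfiltereq : ∀ x ∈ S', (nbr G x).filter (· ∈ S) = (nbr G x).filter (· ∈ S') := by
          intro x hx
          apply htransfilter x hx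
          rw [hk0]
          exact Finset.notMem_empty x
        obtain ⟨w, hwinj, hwW, hwnsd⟩ := ih S' hS'sub hdown' w0 P hPW
          (by rw [hmSeq]; exact hPcard)
          (fun u v hadj h => hassigned u v hadj ((hcond u v hadj).mpr h))
          (fun u v u' v' h1 h2 h3' h4' h5 => hinj0 u v u' v' h1 h2
            ((hcond u v h1).mpr h3') ((hcond u' v' h2).mpr h4') h5)
          (by
            intro u v hadj hu hv
            rw [hsigeq u, hsigeq v]
            apply h3 u v hadj
            · rcases hu with h | h
              · by_cases huS : u ∈ S
                · right
                  have huv₀ : u = v₀ := by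
                    by_contra hc
                    exact h (Finset.mem_erase.mpr ⟨hc, huS⟩)
                  subst huv₀
                  rw [← hNdef, hk0]
                · exact Or.inl huS
              · by_cases huS : u ∈ S
                · right
                  by_cases huv₀ : u = v₀
                  · subst huv₀; rw [← hNdef, hk0]
                  · rw [hfiltereq u (Finset.mem_erase.mpr ⟨huv₀, huS⟩)]
                    exact h
                · exact Or.inl huS
            · rcases hv with h | h
              · by_cases hvS : v ∈ S
                · right
                  have hvv₀ : v = v₀ := by
                    by_contra hc
                    exact h (Finset.mem_erase.mpr ⟨hc, hvS⟩)
                  subst hvv₀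
                  rw [← hNdef, hk0]
                · exact Or.inl hvS
              · by_cases hvS : v ∈ S
                · right
                  by_cases hvv₀ : v = v₀
                  · subst hvv₀; rw [← hNdef, hk0]
                  · rw [hfiltereq v (Finset.mem_erase.mpr ⟨hvv₀, hvS⟩)]
                    exact h
                · exact Or.inl hvS)
          (by
            intro u v hadj huS' hvS' hfu hfv
            rw [hsigeq u, hsigeq v]
            apply h4 u v hadj (hS'S huS') (hS'S hvS')
            · rw [hfiltereq u huS']; exact hfu
            · rw [hfiltereq v hvS']; exact hfv)
        exact ⟨w, hwinj, hwW, hwnsd⟩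
      · -- k ≥ 1 : the main construction step
        have hNne : N.Nonempty := Finset.nonempty_of_ne_empty hk0
        set outN : Finset V := (nbr G v₀).filter (· ∉ S) with houtNdef
        have houtsub : outN ⊆ (nbr G v₀).filter (fun y => rank v₀ < rank y) := by
          intro y hy
          rw [houtNdef, Finset.mem_filter] at hy
          have hadj : G.Adj v₀ y := (mem_nbr G v₀ y).mp hy.1
          rw [Finset.mem_filter]
          exact ⟨hy.1, houtrank v₀ y hv₀S hadj hy.2⟩
        have houtcard : outN.card ≤ 2 := le_trans (Finset.card_le_card houtsub) (hfwd v₀)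
        set D : Finset ℕ := outN.image (fun y => sig G S w0 y) with hDdef
        have hDcard : D.card ≤ 2 := le_trans Finset.card_image_le houtcard
        set T : Finset V := N.filter (fun x => (nbr G x).filter (· ∈ S) = {v₀}) with hTdef
        have hTsub : T ⊆ N := Finset.filter_subset _ _
        have hleafout : ∀ t ∈ N, ((nbr G t).filter (· ∉ S)).card ≤ 1 := by
          intro t htN
          have htS' := hNS' t htN
          have hadj : G.Adj v₀ t := hNadj t htN
          have hv₀notout : v₀ ∉ (nbr G t).filter (· ∉ S) := by
            rw [Finset.mem_filter]
            push_neg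
            intro _
            simpa using hv₀S
          have hsub : insert v₀ ((nbr G t).filter (· ∉ S)) ⊆
              (nbr G t).filter (fun y => rank t < rank y) := by
            intro y hy
            rcases Finset.mem_insert.mp hy with rfl | hy
            · rw [Finset.mem_filter, mem_nbr]
              exact ⟨hadj.symm, hrankS' t htS'⟩
            · rw [Finset.mem_filter] at hy
              have hadj2 : G.Adj t y := (mem_nbr G t y).mp hy.1
              rw [Finset.mem_filter]
              exact ⟨hy.1, houtrank t y (hS'S htS') hadj2 hy.2⟩
          have h1 := Finset.card_le_card hsub
          rw [Finset.card_insert_of_notMem hv₀notout] at h1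
          have h2 := hfwd t
          omega
        have hsig_mem : ∀ x ∈ S, sig G S w0 x = ∑ y ∈ (nbr G x).filter (· ∉ S), w0 s(x,y) := by
          intro x hx
          unfold sig
          refine Finset.sum_congr ?_ (fun _ _ => rfl)
          apply Finset.filter_congr
          intro y _
          exact ⟨fun h hyS => h ⟨hx, hyS⟩, fun h hc => h hc.2⟩
        have hleafsig : ∀ t ∈ N, sig G S w0 t = 0 ∨
            ∃ y, (nbr G t).filter (· ∉ S) = {y} ∧ sig G S w0 t = w0 s(t,y) ∧
              G.Adj t y ∧ y ∉ S := by
          intro t htN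
          have h1 := hleafout t htN
          have htS : t ∈ S := hS'S (hNS' t htN)
          have : Nonempty V := ⟨t⟩
          rcases Finset.card_le_one_iff_subset_singleton.mp h1 with ⟨y, hy⟩
          rcases Finset.subset_singleton_iff.mp hy with h0 | hsing
          · left
            rw [hsig_mem t htS, h0, Finset.sum_empty]
          · right
            have hymem : y ∈ (nbr G t).filter (· ∉ S) := by
              rw [hsing]; exact Finset.mem_singleton_self y
            rw [Finset.mem_filter] at hymem
            refine ⟨y, hsing, ?_, (mem_nbr G t y).mp hymem.1, by simpa using hymem.2⟩
            rw [hsig_mem t htS, hsing, Finset.sum_singleton]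
        have hcinj : ∀ t₁ ∈ T, ∀ t₂ ∈ T, sig G S w0 t₁ = sig G S w0 t₂ →
            sig G S w0 t₁ ≠ 0 → t₁ = t₂ := by
          intro t₁ ht₁ t₂ ht₂ heq hne
          rcases hleafsig t₁ (hTsub ht₁) with h | ⟨y₁, _, hs₁, hadj₁, hyS₁⟩
          · exact absurd h hne
          rcases hleafsig t₂ (hTsub ht₂) with h | ⟨y₂, _, hs₂, hadj₂, hyS₂⟩
          · rw [heq] at hne; exact absurd h hne
          have hT₁S : t₁ ∈ S := hS'S (hNS' t₁ (hTsub ht₁))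
          have hw : w0 s(t₁,y₁) = w0 s(t₂,y₂) := by rw [← hs₁, ← hs₂, heq]
          have hedge := hinj0 t₁ y₁ t₂ y₂ hadj₁ hadj₂ (fun hc => hyS₁ hc.2)
            (fun hc => hyS₂ hc.2) hw
          rcases Sym2.eq_iff.mp hedge with ⟨h1, _⟩ | ⟨h1, _⟩
          · exact h1
          · exact absurd (h1 ▸ hT₁S) hyS₂
        set bad : V → Finset ℕ := fun x =>
          if x ∈ T then ((nbr G x).filter (· ∉ S)).image
            (fun y => sig G S w0 y - sig G S w0 x)
          else ((nbr G x).filter (fun y => y ∈ S' ∧ ¬ G.Adj v₀ y ∧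
            (nbr G x).filter (· ∈ S') = {y} ∧ (nbr G y).filter (· ∈ S') = {x})).image
            (fun y => sig G S w0 y - sig G S w0 x) with hbaddef
        have hbadcard : ∀ x ∈ N, (bad x).card ≤ 1 := by
          intro x hx
          simp only [hbaddef]
          by_cases hxT : x ∈ T
          · rw [if_pos hxT]
            exact le_trans Finset.card_image_le (hleafout x hx)
          · rw [if_neg hxT]
            refine le_trans Finset.card_image_le ?_
            rw [Finset.card_le_one]
            intro a ha b hb
            rw [Finset.mem_filter] at ha hb
            have h1 := ha.2.2.2.1
            have h2 := hb.2.2.2.1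
            rw [h1] at h2
            exact Finset.singleton_inj.mp h2
        set M : Finset (V × V) := (N ×ˢ N).filter (fun m => G.Adj m.1 m.2 ∧
          rank m.1 < rank m.2 ∧ (nbr G m.1).filter (· ∈ S') = {m.2} ∧
          (nbr G m.2).filter (· ∈ S') = {m.1}) with hMdef
        have hMmem : ∀ m ∈ M, m.1 ∈ N ∧ m.2 ∈ N ∧ G.Adj m.1 m.2 ∧ rank m.1 < rank m.2 ∧
            (nbr G m.1).filter (· ∈ S') = {m.2} ∧ (nbr G m.2).filter (· ∈ S') = {m.1} := by
          intro m hm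
          rw [hMdef, Finset.mem_filter, Finset.mem_product] at hm
          exact ⟨hm.1.1, hm.1.2, hm.2.1, hm.2.2.1, hm.2.2.2.1, hm.2.2.2.2⟩
        have hMne : ∀ m ∈ M, m.1 ≠ m.2 := fun m hm => G.ne_of_adj (hMmem m hm).2.2.1
        have hMdisj : ∀ m ∈ M, ∀ m' ∈ M, m ≠ m' →
            m.1 ≠ m'.1 ∧ m.1 ≠ m'.2 ∧ m.2 ≠ m'.1 ∧ m.2 ≠ m'.2 := by
          intro m hm m' hm' hne
          obtain ⟨h1N, h2N, hadj, hrk, hf1, hf2⟩ := hMmem m hm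
          obtain ⟨h1N', h2N', hadj', hrk', hf1', hf2'⟩ := hMmem m' hm'
          refine ⟨?_, ?_, ?_, ?_⟩
          · intro hc
            apply hne
            have h : ({m.2} : Finset V) = {m'.2} := by rw [← hf1, hc, hf1']
            exact Prod.ext hc (Finset.singleton_inj.mp h)
          · intro hc
            have h : ({m.2} : Finset V) = {m'.1} := by rw [← hf1, hc, hf2']
            have h2 := Finset.singleton_inj.mp h
            rw [hc, h2] at hrk
            omega
          · intro hc
            have h : ({m.1} : Finset V) = {m'.2} := by rw [← hf2, hc, hf1']
            have h2 := Finset.singleton_inj.mp h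
            rw [hc, h2] at hrk
            omega
          · intro hc
            apply hne
            have h : ({m.1} : Finset V) = {m'.1} := by rw [← hf2, hc, hf2']
            exact Prod.ext (Finset.singleton_inj.mp h) hc
        have hMN : ∀ m ∈ M, m.1 ∈ N ∧ m.2 ∈ N ∧ m.1 ∉ T ∧ m.2 ∉ T := by
          intro m hm
          obtain ⟨h1N, h2N, hadj, _, hf1, hf2⟩ := hMmem m hm
          refine ⟨h1N, h2N, ?_, ?_⟩
          · intro hT
            rw [hTdef, Finset.mem_filter] at hT
            have hm2 : m.2 ∈ (nbr G m.1).filter (· ∈ S) := by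
              rw [Finset.mem_filter, mem_nbr]
              exact ⟨hadj, hS'S (hNS' _ h2N)⟩
            rw [hT.2, Finset.mem_singleton] at hm2
            exact hv₀S' (hm2 ▸ hNS' _ h2N)
          · intro hT
            rw [hTdef, Finset.mem_filter] at hT
            have hm1 : m.1 ∈ (nbr G m.2).filter (· ∈ S) := by
              rw [Finset.mem_filter, mem_nbr]
              exact ⟨hadj.symm, hS'S (hNS' _ h1N)⟩
            rw [hT.2, Finset.mem_singleton] at hm1
            exact hv₀S' (hm1 ▸ hNS' _ h1N)
        have hk1cond : N.card = 1 → ∀ t ∈ T, sig G S w0 t ≠ sig G S w0 v₀ := by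
          intro hN1 t htT
          obtain ⟨x, hx⟩ := Finset.card_eq_one.mp hN1
          have htx : t = x := by
            have := hTsub htT
            rw [hx, Finset.mem_singleton] at this
            exact this
          subst htx
          have hadj : G.Adj v₀ t := hNadj t (hTsub htT)
          have hTcond : (nbr G t).filter (· ∈ S) = {v₀} := by
            rw [hTdef, Finset.mem_filter] at htT
            exact htT.2
          have hNcond : (nbr G v₀).filter (· ∈ S) = {t} := by rw [← hNdef, hx]
          exact fun hc =>
            (h4 v₀ t hadj hv₀S (hS'S (hNS' t (hTsub htT))) hNcond hTcond) hc.symm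
        -- edge counting
        have himgedge : ∀ x ∈ N, (s(v₀,x) : Sym2 V) ∈
            G.edgeFinset.filter (fun e => ∀ v ∈ e, v ∈ S) := by
          intro x hx
          rw [Finset.mem_filter, SimpleGraph.mem_edgeFinset]
          refine ⟨hNadj x hx, (allin_pair S v₀ x).mpr ⟨hv₀S, hS'S (hNS' x hx)⟩⟩
        have hinjedge : Set.InjOn (fun x => (s(v₀,x) : Sym2 V)) ↑N := by
          intro a _ b _ hab
          exact Sym2.congr_right.mp hab
        have hmSstep : mS G S = mS G S' + N.card := by
          have hdisj : Disjoint (G.edgeFinset.filter (fun e => ∀ v ∈ e, v ∈ S'))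
              (N.image (fun x => s(v₀,x))) := by
            rw [Finset.disjoint_right]
            intro e he hc
            obtain ⟨x, _, rfl⟩ := Finset.mem_image.mp he
            rw [Finset.mem_filter] at hc
            exact hv₀S' (hc.2 v₀ (Sym2.mem_mk_left _ _))
          have hsplitset : G.edgeFinset.filter (fun e => ∀ v ∈ e, v ∈ S) =
              (G.edgeFinset.filter (fun e => ∀ v ∈ e, v ∈ S')) ∪
              N.image (fun x => s(v₀,x)) := by
            apply Finset.Subset.antisymm
            · intro e he
              rw [Finset.mem_filter, SimpleGraph.mem_edgeFinset] at he
              obtain ⟨hadj, hall⟩ := he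
              induction e using Sym2.inductionOn with | _ a b =>
              rw [allin_pair] at hall
              by_cases hav : a = v₀
              · subst hav
                refine Finset.mem_union_right _ (Finset.mem_image.mpr ⟨b, ?_, rfl⟩)
                rw [hNdef, Finset.mem_filter, mem_nbr]
                exact ⟨hadj, hall.2⟩
              · by_cases hbv : b = v₀
                · subst hbv
                  refine Finset.mem_union_right _ (Finset.mem_image.mpr ⟨a, ?_, ?_⟩)
                  · rw [hNdef, Finset.mem_filter, mem_nbr]
                    exact ⟨hadj.symm, hall.1⟩
                  · exact Sym2.eq_swap
                · refine Finset.mem_union_left _ ?_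
                  rw [Finset.mem_filter, SimpleGraph.mem_edgeFinset, allin_pair]
                  exact ⟨hadj, Finset.mem_erase.mpr ⟨hav, hall.1⟩,
                    Finset.mem_erase.mpr ⟨hbv, hall.2⟩⟩
            · intro e he
              rcases Finset.mem_union.mp he with he | he
              · rw [Finset.mem_filter] at he ⊢
                exact ⟨he.1, fun v hv => hS'S (he.2 v hv)⟩
              · obtain ⟨x, hx, rfl⟩ := Finset.mem_image.mp he
                exact himgedge x hx
          unfold mS
          rw [hsplitset, Finset.card_union_of_disjoint hdisj,
            Finset.card_image_of_injOn hinjedge]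
        have hNcardP : N.card + 4 ≤ P.card := by
          have h1 : N.card ≤ mS G S := by omega
          omega
        obtain ⟨β, hβinj, hβmem, hβD, hβcpl, hβpair⟩ := arithChoice N hNne P
          (fun n hn => hWpos n (hPW hn)) hNcardP (sig G S w0 v₀) D hDcard T hTsub
          (sig G S w0) hcinj hk1cond bad hbadcard M (sig G S w0) hMne hMdisj hMN
        -- definition of the extended weighting
        set w1 : Sym2 V → ℕ := fun e =>
          if h : v₀ ∈ e then (if Sym2.Mem.other' h ∈ S then β (Sym2.Mem.other' h) else w0 e)
          else w0 e with hw1def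
        have hw1pair : ∀ x, x ∈ S → w1 s(v₀, x) = β x := by
          intro x hxS
          have hv₀mem : v₀ ∈ (s(v₀,x) : Sym2 V) := Sym2.mem_mk_left _ _
          have hother : Sym2.Mem.other' hv₀mem = x :=
            Sym2.congr_right.mp (Sym2.other_spec' hv₀mem)
          simp only [hw1def]
          rw [dif_pos hv₀mem, hother, if_pos hxS]
        have hw1nov : ∀ (e : Sym2 V), v₀ ∉ e → w1 e = w0 e := by
          intro e he
          simp only [hw1def]
          rw [dif_neg he]
        have hw1old : ∀ u v, G.Adj u v → ¬(u ∈ S ∧ v ∈ S) → w1 s(u,v) = w0 s(u,v) := by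
          intro u v hadj hnot
          by_cases hv₀e : v₀ ∈ (s(u,v) : Sym2 V)
          · rcases Sym2.mem_iff.mp hv₀e with rfl | rfl
            · have hvS : v ∉ S := fun hc => hnot ⟨hv₀S, hc⟩
              have hother : Sym2.Mem.other' hv₀e = v :=
                Sym2.congr_right.mp (Sym2.other_spec' hv₀e)
              simp only [hw1def]
              rw [dif_pos hv₀e, hother, if_neg hvS]
            · have huS : u ∉ S := fun hc => hnot ⟨hc, hv₀S⟩
              have hswap : (s(u,v₀) : Sym2 V) = s(v₀,u) := Sym2.eq_swap
              have hv₀e' : v₀ ∈ (s(v₀,u) : Sym2 V) := Sym2.mem_mk_left _ _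
              have hother : Sym2.Mem.other' hv₀e' = u :=
                Sym2.congr_right.mp (Sym2.other_spec' hv₀e')
              rw [hswap]
              simp only [hw1def]
              rw [dif_pos hv₀e', hother, if_neg huS]
          · exact hw1nov _ hv₀e
        -- sums after the extension
        have hsig_mem' : ∀ x, x ∈ S' → sig G S' w1 x =
            ∑ y ∈ (nbr G x).filter (· ∉ S'), w1 s(x,y) := by
          intro x hx
          unfold sig
          refine Finset.sum_congr ?_ (fun _ _ => rfl)
          apply Finset.filter_congr
          intro y _
          exact ⟨fun h hyS => h ⟨hx, hyS⟩, fun h hc => h hc.2⟩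
        have hsigN : ∀ x ∈ N, sig G S' w1 x = sig G S w0 x + β x := by
          intro x hx
          have hxS' := hNS' x hx
          have hxS := hS'S hxS'
          have hv₀nb : v₀ ∉ (nbr G x).filter (· ∉ S) := by
            rw [Finset.mem_filter]
            push_neg
            intro _
            simpa using hv₀S
          have hset : (nbr G x).filter (· ∉ S') = insert v₀ ((nbr G x).filter (· ∉ S)) := by
            ext y
            rw [Finset.mem_insert, Finset.mem_filter, Finset.mem_filter]
            constructor
            · rintro ⟨hy1, hy2⟩
              by_cases hyv : y = v₀
              · exact Or.inl hyv
              · refine Or.inr ⟨hy1, ?_⟩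
                intro hyS
                exact hy2 (Finset.mem_erase.mpr ⟨hyv, hyS⟩)
            · rintro (rfl | ⟨hy1, hy2⟩)
              · rw [mem_nbr]
                exact ⟨(hNadj x hx).symm, by simpa using hv₀S'⟩
              · refine ⟨hy1, ?_⟩
                intro hyS'
                exact hy2 (hS'S hyS')
          rw [hsig_mem' x hxS', hset, Finset.sum_insert hv₀nb]
          have h1 : w1 s(x,v₀) = β x := by
            rw [show (s(x,v₀) : Sym2 V) = s(v₀,x) from Sym2.eq_swap]
            exact hw1pair x hxS
          have h2 : ∀ y ∈ (nbr G x).filter (· ∉ S), w1 s(x,y) = w0 s(x,y) := by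
            intro y hy
            rw [Finset.mem_filter] at hy
            have hadj : G.Adj x y := (mem_nbr G x y).mp hy.1
            exact hw1old x y hadj (fun hc => hy.2 hc.2)
          rw [h1, Finset.sum_congr rfl h2, ← hsig_mem x hxS]
          omega
        have hsigKeep : ∀ x, x ∈ S' → x ∉ N → sig G S' w1 x = sig G S w0 x := by
          intro x hxS' hxN
          have hxS := hS'S hxS'
          have hset : (nbr G x).filter (· ∉ S') = (nbr G x).filter (· ∉ S) := by
            apply Finset.filter_congr
            intro y hy
            rw [mem_nbr] at hy
            constructor
            · intro h hyS
              exact h (Finset.mem_erase.mpr ⟨fun hc => hxN (by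
                rw [hNdef, Finset.mem_filter, mem_nbr]
                exact ⟨hc ▸ hy.symm, hxS⟩), hyS⟩)
            · intro h hyS'
              exact h (hS'S hyS')
          rw [hsig_mem' x hxS', hset]
          have h2 : ∀ y ∈ (nbr G x).filter (· ∉ S), w1 s(x,y) = w0 s(x,y) := by
            intro y hy
            rw [Finset.mem_filter] at hy
            have hadj : G.Adj x y := (mem_nbr G x y).mp hy.1
            exact hw1old x y hadj (fun hc => hy.2 hc.2)
          rw [Finset.sum_congr rfl h2, ← hsig_mem x hxS]
        have hsigOut : ∀ x, x ∉ S → sig G S' w1 x = sig G S w0 x := by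
          intro x hxS
          have hxS' : x ∉ S' := fun hc => hxS (hS'S hc)
          unfold sig
          have hset : ∀ (A : Finset V), (nbr G x).filter (fun y => ¬(x ∈ A ∧ y ∈ A)) =
              nbr G x → True := fun _ _ => trivial
          have h1 : (nbr G x).filter (fun y => ¬(x ∈ S' ∧ y ∈ S')) = nbr G x :=
            Finset.filter_true_of_mem (fun y _ => fun hc => hxS' hc.1)
          have h2 : (nbr G x).filter (fun y => ¬(x ∈ S ∧ y ∈ S)) = nbr G x :=
            Finset.filter_true_of_mem (fun y _ => fun hc => hxS hc.1)
          rw [h1, h2]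
          apply Finset.sum_congr rfl
          intro y hy
          have hadj : G.Adj x y := (mem_nbr G x y).mp hy
          exact hw1old x y hadj (fun hc => hxS hc.1)
        have hsigv₀ : sig G S' w1 v₀ = sig G S w0 v₀ + ∑ x ∈ N, β x := by
          have h1 : (nbr G v₀).filter (fun y => ¬(v₀ ∈ S' ∧ y ∈ S')) = nbr G v₀ :=
            Finset.filter_true_of_mem (fun y _ => fun hc => hv₀S' hc.1)
          have hsplitnbr : nbr G v₀ = N ∪ outN := by
            rw [hNdef, houtNdef]
            exact (Finset.filter_union_filter_not_eq _ _).symm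
          have hdisjN : Disjoint N outN := by
            rw [Finset.disjoint_right]
            intro y hy hc
            rw [houtNdef, Finset.mem_filter] at hy
            rw [hNdef, Finset.mem_filter] at hc
            exact hy.2 hc.2
          have h2 : ∀ x ∈ N, w1 s(v₀,x) = β x := by
            intro x hx
            exact hw1pair x (hS'S (hNS' x hx))
          have h3 : ∀ y ∈ outN, w1 s(v₀,y) = w0 s(v₀,y) := by
            intro y hy
            rw [houtNdef, Finset.mem_filter] at hy
            have hadj : G.Adj v₀ y := (mem_nbr G v₀ y).mp hy.1
            refine hw1old v₀ y hadj (fun hc => hy.2 hc.2)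
          have h4 : sig G S w0 v₀ = ∑ y ∈ outN, w0 s(v₀,y) := by
            rw [hsig_mem v₀ hv₀S, houtNdef]
          have hL : sig G S' w1 v₀ = ∑ y ∈ nbr G v₀, w1 s(v₀,y) := by
            unfold sig
            rw [h1]
          rw [hL, hsplitnbr, Finset.sum_union hdisjN, Finset.sum_congr rfl h2,
            Finset.sum_congr rfl h3, h4]
          exact Nat.add_comm _ _
        -- clean restatements of the choice's guarantees
        have hβD' : sig G S w0 v₀ + ∑ x ∈ N, β x ∉ D := hβD
        have hTfin : ∀ x ∈ N, (nbr G x).filter (· ∈ S') = ∅ → x ∈ T := by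
          intro x hx hfin
          rw [hTdef, Finset.mem_filter]
          refine ⟨hx, ?_⟩
          ext y
          rw [Finset.mem_filter, Finset.mem_singleton]
          constructor
          · rintro ⟨hy1, hy2⟩
            by_contra hc
            have hmem : y ∈ (nbr G x).filter (· ∈ S') := by
              rw [Finset.mem_filter]
              exact ⟨hy1, Finset.mem_erase.mpr ⟨hc, hy2⟩⟩
            rw [hfin] at hmem
            exact absurd hmem (Finset.notMem_empty y)
          · rintro rfl
            rw [mem_nbr]
            exact ⟨(hNadj x hx).symm, hv₀S⟩
        have hnotNnotadj : ∀ y, y ∈ S → y ∉ N → ¬ G.Adj v₀ y := by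
          intro y hyS hyN hadj
          exact hyN (by rw [hNdef, Finset.mem_filter, mem_nbr]; exact ⟨hadj, hyS⟩)
        have hbadT : ∀ t ∈ T, ∀ y, G.Adj t y → y ∉ S →
            sig G S w0 t + β t ≠ sig G S w0 y := by
          intro t ht y hadj hyS hc
          apply (hβmem t (hTsub ht)).2
          simp only [hbaddef]
          rw [if_pos ht]
          refine Finset.mem_image.mpr ⟨y, ?_, by omega⟩
          rw [Finset.mem_filter, mem_nbr]
          exact ⟨hadj, by simpa using hyS⟩
        have hbadE : ∀ x ∈ N, x ∉ T → ∀ y, G.Adj x y → y ∈ S' → ¬ G.Adj v₀ y →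
            (nbr G x).filter (· ∈ S') = {y} → (nbr G y).filter (· ∈ S') = {x} →
            sig G S w0 x + β x ≠ sig G S w0 y := by
          intro x hx hxT y hadj hyS' hynadj hfx hfy hc
          apply (hβmem x hx).2
          simp only [hbaddef]
          rw [if_neg hxT]
          refine Finset.mem_image.mpr ⟨y, ?_, by omega⟩
          rw [Finset.mem_filter, mem_nbr]
          exact ⟨hadj, hyS', hynadj, hfx, hfy⟩
        -- dichotomy for edges assigned after this step
        have hdich : ∀ u v, G.Adj u v → ¬(u ∈ S' ∧ v ∈ S') → ¬(u ∈ S ∧ v ∈ S) ∨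
            (u = v₀ ∧ v ∈ N) ∨ (v = v₀ ∧ u ∈ N) := by
          intro u v hadj h
          by_cases hS : u ∈ S ∧ v ∈ S
          · right
            by_cases huv : u = v₀
            · refine Or.inl ⟨huv, ?_⟩
              rw [hNdef, Finset.mem_filter, mem_nbr]
              exact ⟨by rw [← huv]; exact hadj, hS.2⟩
            · have hu' : u ∈ S' := Finset.mem_erase.mpr ⟨huv, hS.1⟩
              have hv' : v = v₀ := by
                by_contra hc
                exact h ⟨hu', Finset.mem_erase.mpr ⟨hc, hS.2⟩⟩
              refine Or.inr ⟨hv', ?_⟩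
              rw [hNdef, Finset.mem_filter, mem_nbr]
              exact ⟨by rw [← hv']; exact hadj.symm, hS.1⟩
          · exact Or.inl hS
        have hvalform : ∀ u v, G.Adj u v → ¬(u ∈ S' ∧ v ∈ S') →
            (w1 s(u,v) = w0 s(u,v) ∧ ¬(u ∈ S ∧ v ∈ S)) ∨
            (∃ x ∈ N, (s(u,v) : Sym2 V) = s(v₀,x) ∧ w1 s(u,v) = β x) := by
          intro u v hadj h
          rcases hdich u v hadj h with hold | ⟨huv, hvN⟩ | ⟨hvv, huN⟩
          · exact Or.inl ⟨hw1old u v hadj hold, hold⟩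
          · refine Or.inr ⟨v, hvN, by rw [huv], ?_⟩
            rw [huv]
            exact hw1pair v (hS'S (hNS' v hvN))
          · refine Or.inr ⟨u, huN, ?_, ?_⟩
            · rw [hvv]; exact Sym2.eq_swap
            · rw [hvv, show (s(u,v₀) : Sym2 V) = s(v₀,u) from Sym2.eq_swap]
              exact hw1pair u (hS'S (hNS' u huN))
        set P' : Finset ℕ := P \ N.image β with hP'def
        have himgsub : N.image β ⊆ P := by
          intro z hz
          obtain ⟨x, hx, rfl⟩ := Finset.mem_image.mp hz
          exact (hβmem x hx).1
        have himgcard : (N.image β).card = N.card := Finset.card_image_of_injOn hβinj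
        have hP'card : P'.card = mS G S' + 4 := by
          rw [hP'def, Finset.card_sdiff_of_subset himgsub, himgcard, hPcard, hmSstep]
          omega
        have hP'W : P' ⊆ W := fun z hz => hPW (Finset.mem_sdiff.mp hz).1
        have hassigned' : ∀ u v, G.Adj u v → ¬(u ∈ S' ∧ v ∈ S') →
            w1 s(u,v) ∈ W ∧ w1 s(u,v) ∉ P' := by
          intro u v hadj h
          rcases hvalform u v hadj h with ⟨heq, hold⟩ | ⟨x, hxN, hedge, heq⟩
          · rw [heq]
            refine ⟨(hassigned u v hadj hold).1, fun hc => (hassigned u v hadj hold).2 ?_⟩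
            exact (Finset.mem_sdiff.mp hc).1
          · rw [heq]
            refine ⟨hPW (hβmem x hxN).1, fun hc => ?_⟩
            rw [hP'def, Finset.mem_sdiff] at hc
            exact hc.2 (Finset.mem_image.mpr ⟨x, hxN, rfl⟩)
        have hinj0' : ∀ u v u' v', G.Adj u v → G.Adj u' v' → ¬(u ∈ S' ∧ v ∈ S') →
            ¬(u' ∈ S' ∧ v' ∈ S') → w1 s(u,v) = w1 s(u',v') →
            (s(u,v) : Sym2 V) = s(u',v') := by
          intro u v u' v' h1 h2 h3' h4' h5
          rcases hvalform u v h1 h3' with ⟨heq, hold⟩ | ⟨x, hxN, hedge, heq⟩ <;>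
            rcases hvalform u' v' h2 h4' with ⟨heq', hold'⟩ | ⟨x', hxN', hedge', heq'⟩
          · rw [heq, heq'] at h5
            exact hinj0 u v u' v' h1 h2 hold hold' h5
          · exfalso
            rw [heq, heq'] at h5
            exact (hassigned u v h1 hold).2 (h5 ▸ (hβmem x' hxN').1)
          · exfalso
            rw [heq, heq'] at h5
            exact (hassigned u' v' h2 hold').2 (h5 ▸ (hβmem x hxN).1)
          · rw [heq, heq'] at h5
            have hxx : x = x' := hβinj (Finset.mem_coe.mpr hxN) (Finset.mem_coe.mpr hxN') h5
            rw [hedge, hedge', hxx]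
        have h3new : ∀ u v, G.Adj u v → (u ∉ S' ∨ (nbr G u).filter (· ∈ S') = ∅) →
            (v ∉ S' ∨ (nbr G v).filter (· ∈ S') = ∅) →
            sig G S' w1 u ≠ sig G S' w1 v := by
          intro u v hadj hu hv
          by_cases huS : u ∈ S
          · by_cases hvS : v ∈ S
            · -- both in S
              by_cases huv₀ : u = v₀
              · subst huv₀
                have hvN : v ∈ N := by
                  rw [hNdef, Finset.mem_filter, mem_nbr]
                  exact ⟨hadj, hvS⟩
                have hvS' : v ∈ S' := hNS' v hvN
                have hvfin : (nbr G v).filter (· ∈ S') = ∅ := by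
                  rcases hv with h | h
                  · exact absurd hvS' h
                  · exact h
                have hvT : v ∈ T := hTfin v hvN hvfin
                rw [hsigv₀, hsigN v hvN]
                exact fun hc => (hβcpl v hvT) hc.symm
              · by_cases hvv₀ : v = v₀
                · subst hvv₀
                  have huN : u ∈ N := by
                    rw [hNdef, Finset.mem_filter, mem_nbr]
                    exact ⟨hadj.symm, huS⟩
                  have huS' : u ∈ S' := hNS' u huN
                  have hufin : (nbr G u).filter (· ∈ S') = ∅ := by
                    rcases hu with h | h
                    · exact absurd huS' h
                    · exact h
                  have huT : u ∈ T := hTfin u huN hufin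
                  rw [hsigv₀, hsigN u huN]
                  exact hβcpl u huT
                · exfalso
                  have huS' : u ∈ S' := Finset.mem_erase.mpr ⟨huv₀, huS⟩
                  have hvS' : v ∈ S' := Finset.mem_erase.mpr ⟨hvv₀, hvS⟩
                  have hufin : (nbr G u).filter (· ∈ S') = ∅ := by
                    rcases hu with h | h
                    · exact absurd huS' h
                    · exact h
                  have : v ∈ (nbr G u).filter (· ∈ S') := by
                    rw [Finset.mem_filter, mem_nbr]
                    exact ⟨hadj, hvS'⟩
                  rw [hufin] at this
                  exact absurd this (Finset.notMem_empty v)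
            · -- u ∈ S, v ∉ S
              by_cases huv₀ : u = v₀
              · subst huv₀
                have hvout : v ∈ outN := by
                  rw [houtNdef, Finset.mem_filter, mem_nbr]
                  exact ⟨hadj, by simpa using hvS⟩
                rw [hsigv₀, hsigOut v hvS]
                intro hc
                apply hβD'
                rw [hDdef]
                exact Finset.mem_image.mpr ⟨v, hvout, hc.symm⟩
              · have huS' : u ∈ S' := Finset.mem_erase.mpr ⟨huv₀, huS⟩
                have hufin : (nbr G u).filter (· ∈ S') = ∅ := by
                  rcases hu with h | h
                  · exact absurd huS' h
                  · exact h
                by_cases huN : u ∈ N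
                · have huT : u ∈ T := hTfin u huN hufin
                  rw [hsigN u huN, hsigOut v hvS]
                  exact hbadT u huT v hadj hvS
                · have hold : (nbr G u).filter (· ∈ S) = ∅ := by
                    rw [htransfilter u huS' huN]
                    exact hufin
                  rw [hsigKeep u huS' huN, hsigOut v hvS]
                  exact h3 u v hadj (Or.inr hold) (Or.inl hvS)
          · by_cases hvS : v ∈ S
            · -- u ∉ S, v ∈ S : mirror
              by_cases hvv₀ : v = v₀
              · subst hvv₀
                have huout : u ∈ outN := by
                  rw [houtNdef, Finset.mem_filter, mem_nbr]
                  exact ⟨hadj.symm, by simpa using huS⟩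
                rw [hsigv₀, hsigOut u huS]
                intro hc
                apply hβD'
                rw [hDdef]
                exact Finset.mem_image.mpr ⟨u, huout, hc⟩
              · have hvS' : v ∈ S' := Finset.mem_erase.mpr ⟨hvv₀, hvS⟩
                have hvfin : (nbr G v).filter (· ∈ S') = ∅ := by
                  rcases hv with h | h
                  · exact absurd hvS' h
                  · exact h
                by_cases hvN : v ∈ N
                · have hvT : v ∈ T := hTfin v hvN hvfin
                  rw [hsigN v hvN, hsigOut u huS]
                  exact fun hc => (hbadT v hvT u hadj.symm huS) hc.symm
                · have hold : (nbr G v).filter (· ∈ S) = ∅ := by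
                    rw [htransfilter v hvS' hvN]
                    exact hvfin
                  rw [hsigKeep v hvS' hvN, hsigOut u huS]
                  exact h3 u v hadj (Or.inl huS) (Or.inr hold)
            · -- both outside S
              rw [hsigOut u huS, hsigOut v hvS]
              exact h3 u v hadj (Or.inl huS) (Or.inl hvS)
        have h4new : ∀ u v, G.Adj u v → u ∈ S' → v ∈ S' →
            (nbr G u).filter (· ∈ S') = {v} → (nbr G v).filter (· ∈ S') = {u} →
            sig G S' w1 u ≠ sig G S' w1 v := by
          intro u v hadj huS' hvS' hfu hfv
          have hnotT : ∀ x y, x ∈ N → G.Adj x y → y ∈ S' → x ∉ T := by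
            intro x y hxN hxy hyS' hxT
            rw [hTdef, Finset.mem_filter] at hxT
            have : y ∈ (nbr G x).filter (· ∈ S) := by
              rw [Finset.mem_filter, mem_nbr]
              exact ⟨hxy, hS'S hyS'⟩
            rw [hxT.2, Finset.mem_singleton] at this
            exact hv₀S' (this ▸ hyS')
          by_cases huN : u ∈ N
          · by_cases hvN : v ∈ N
            · -- both in N : matched pair
              have hrne : rank u ≠ rank v := fun hc => (G.ne_of_adj hadj) (hrinj hc)
              rw [hsigN u huN, hsigN v hvN]
              rcases lt_or_gt_of_ne hrne with hlt | hgt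
              · have hmM : (u, v) ∈ M := by
                  rw [hMdef, Finset.mem_filter, Finset.mem_product]
                  exact ⟨⟨huN, hvN⟩, hadj, hlt, hfu, hfv⟩
                exact hβpair (u, v) hmM
              · have hmM : (v, u) ∈ M := by
                  rw [hMdef, Finset.mem_filter, Finset.mem_product]
                  exact ⟨⟨hvN, huN⟩, hadj.symm, hgt, hfv, hfu⟩
                exact fun hc => (hβpair (v, u) hmM) hc.symm
            · -- u ∈ N, v ∉ N : single
              have huT : u ∉ T := hnotT u v huN hadj hvS'
              have hvnadj : ¬ G.Adj v₀ v := hnotNnotadj v (hS'S hvS') hvN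
              rw [hsigN u huN, hsigKeep v hvS' hvN]
              exact hbadE u huN huT v hadj hvS' hvnadj hfu hfv
          · by_cases hvN : v ∈ N
            · have hvT : v ∉ T := hnotT v u hvN hadj.symm huS'
              have hunadj : ¬ G.Adj v₀ u := hnotNnotadj u (hS'S huS') huN
              rw [hsigN v hvN, hsigKeep u huS' huN]
              exact fun hc => (hbadE v hvN hvT u hadj.symm huS' hunadj hfv hfu) hc.symm
            · -- both not in N : old pendant pair
              rw [hsigKeep u huS' huN, hsigKeep v hvS' hvN]
              apply h4 u v hadj (hS'S huS') (hS'S hvS')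
              · rw [htransfilter u huS' huN]; exact hfu
              · rw [htransfilter v hvS' hvN]; exact hfv
        exact ih S' hS'sub hdown' w1 P' hP'W hP'card hassigned' hinj0' h3new h4new

end MainInduction

end Auxiliary

theorem stmt_13 {V : Type*} [Fintype V] (G : SimpleGraph V) (hnice : Nice G)
    (hdegen : ∀ H : G.Subgraph, H.verts.Nonempty → ∃ v ∈ H.verts, (H.neighborSet v).ncard ≤ 2) :
    (∀ W : Finset ℕ, (∀ x ∈ W, 0 < x) → W.card = G.edgeSet.ncard + 4 →
        ∃ w : Sym2 V → ℕ, Set.InjOn w G.edgeSet ∧ Set.MapsTo w G.edgeSet ↑W ∧ NSD G w)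
      ∧ chiE1 G ≤ G.edgeSet.ncard + 4 := by
  classical
  have main : ∀ W : Finset ℕ, (∀ x ∈ W, 0 < x) → W.card = G.edgeSet.ncard + 4 →
      ∃ w : Sym2 V → ℕ, Set.InjOn w G.edgeSet ∧ Set.MapsTo w G.edgeSet ↑W ∧ NSD G w := by
    intro W hWpos hWcard
    obtain ⟨rank, hrinj, hr2⟩ := exists_rank G hdegen
    have hfwd : ∀ x, ((nbr G x).filter (fun y => rank x < rank y)).card ≤ 2 := by
      intro x
      have h := hr2 x
      have heq : (nbr G x).filter (fun y => rank x < rank y) =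
          Finset.univ.filter (fun y => G.Adj x y ∧ rank x < rank y) := by
        rw [nbr, Finset.filter_filter]
      rw [heq]
      exact h
    have hmSuniv : mS G Finset.univ = G.edgeSet.ncard := by
      unfold mS
      rw [Finset.filter_true_of_mem (fun e _ => fun v _ => Finset.mem_univ v)]
      rw [Set.ncard_eq_toFinset_card']
      exact congrArg Finset.card (by ext e; simp)
    obtain ⟨w, hwinj, hwW, hwnsd⟩ := mainLemma G W hWpos rank hrinj hfwd Finset.univ
      (fun x _ y _ => Finset.mem_univ y)
      (fun _ => 0) W (le_refl W)
      (by rw [hmSuniv]; exact hWcard)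
      (fun u v _ h => absurd ⟨Finset.mem_univ u, Finset.mem_univ v⟩ h)
      (fun u v u' v' _ _ h _ _ => absurd ⟨Finset.mem_univ u, Finset.mem_univ v⟩ h)
      (by
        intro u v hadj hu _
        exfalso
        rcases hu with h | h
        · exact h (Finset.mem_univ u)
        · have hmem : v ∈ (nbr G u).filter (· ∈ (Finset.univ : Finset V)) := by
            rw [Finset.mem_filter, mem_nbr]
            exact ⟨hadj, Finset.mem_univ v⟩
          rw [h] at hmem
          exact absurd hmem (Finset.notMem_empty v))
      (by
        intro u v hadj _ _ hfu hfv
        exfalso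
        apply hnice u v hadj
        have hftu : (nbr G u).filter (· ∈ (Finset.univ : Finset V)) = nbr G u :=
          Finset.filter_true_of_mem (fun _ _ => Finset.mem_univ _)
        have hftv : (nbr G v).filter (· ∈ (Finset.univ : Finset V)) = nbr G v :=
          Finset.filter_true_of_mem (fun _ _ => Finset.mem_univ _)
        constructor
        · show (Finset.univ.filter (fun x => G.Adj u x)).card = 1
          have : nbr G u = {v} := by rw [← hftu]; exact hfu
          rw [show Finset.univ.filter (fun x => G.Adj u x) = nbr G u from rfl, this]
          simp
        · show (Finset.univ.filter (fun x => G.Adj v x)).card = 1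
          have : nbr G v = {u} := by rw [← hftv]; exact hfv
          rw [show Finset.univ.filter (fun x => G.Adj v x) = nbr G v from rfl, this]
          simp)
    refine ⟨w, hwinj, ?_, ?_⟩
    · intro e he
      exact Finset.mem_coe.mpr (hwW e he)
    · intro u v hadj
      show vSum G w u ≠ vSum G w v
      exact hwnsd u v hadj
  refine ⟨main, ?_⟩
  obtain ⟨w, hinj, hmaps, hnsd⟩ := main (Finset.Icc 1 (G.edgeSet.ncard + 4))
    (fun x hx => (Finset.mem_Icc.mp hx).1) (by simp)
  exact Nat.sInf_le ⟨w, fun e he => hmaps he, fun e he f hf h => hinj he hf h, hnsd⟩
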